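/- arXiv:2211.04871 — 7 statements merged into one kernel-verified Lean document; each statement's English description precedes it below -/
import Mathlib

section
/- If a word w over [n] with A(w) = [n] 12-represents a labeled graph G, and x, y, z are vertices with labels satisfying x < y < z such that xy ∈ E(G) and yz ∈ E(G), then xz ∈ E(G). In other words, no 12-representable labeled graph contains an induced copy of I_3: a path x–y–z with labels x < y < z and xz ∉ E(G). -/
/-- The subword of `w` consisting of the occurrences of `x` and `y`. -/
def subw {n : ℕ} (w : List (Fin n)) (x y : Fin n) : List (Fin n) :=
  w.filter fun a => decide (a = x ∨ a = y)

/-- A word has a 12-match if some letter is immediately followed by a strictly larger one. -/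
def Has12 {n : ℕ} (s : List (Fin n)) : Prop :=
  ∃ a b : Fin n, a < b ∧ [a, b] <:+: s

/-- `w` 12-represents the labeled graph `G` on `Fin n`. -/
def Rep12 {n : ℕ} (w : List (Fin n)) (G : SimpleGraph (Fin n)) : Prop :=
  (∀ i : Fin n, i ∈ w) ∧
  ∀ x y : Fin n, x ≠ y → (G.Adj x y ↔ ¬ Has12 (subw w x y))

/-- A graph is 12-representable if some labeling of its vertices admits a 12-representant. -/
def Rep12able {V : Type} [Fintype V] (G : SimpleGraph V) : Prop :=
  ∃ (f : V ≃ Fin (Fintype.card V)) (w : List (Fin (Fintype.card V))),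
    Rep12 w (G.map f.toEmbedding)

open List

/-- Over an alphabet `{a,b}`, a sublist `[a,b]` forces an adjacent occurrence. -/
lemma has12_aux {n : ℕ} {a b : Fin n} (hab : a < b) :
    ∀ s : List (Fin n), (∀ c ∈ s, c = a ∨ c = b) → [a, b] <+ s → Has12 s := by
  intro s
  induction s with
  | nil => intro _ h; simp at h
  | cons c t ih =>
    intro hmem hsub
    rcases List.sublist_cons_iff.mp hsub with h | ⟨r, hr, hsubr⟩
    · obtain ⟨p, q, hpq, hinf⟩ := ih (fun c hc => hmem c (List.mem_cons_of_mem _ hc)) h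
      exact ⟨p, q, hpq, hinf.trans (List.infix_cons (List.infix_refl t))⟩
    · -- hr : [a, b] = c :: r, so c = a, r = [b]
      have hc : c = a := by injection hr with h1 h2; exact h1.symm
      have hrr : r = [b] := by injection hr with h1 h2; exact h2.symm
      rw [hrr] at hsubr
      have hb : b ∈ t := List.singleton_sublist.mp hsubr
      cases t with
      | nil => simp at hb
      | cons d t' =>
        rcases hmem d (by simp) with hd | hd
        · -- d = a ; then b ∈ t' since b ≠ a
          have hb' : b ∈ t' := by
            rcases List.mem_cons.mp hb with h | h
            · exact absurd (h.trans hd) (ne_of_gt hab)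
            · exact h
          have hsub' : [a, b] <+ d :: t' := by
            rw [hd]; exact (List.singleton_sublist.mpr hb').cons₂ a
          obtain ⟨p, q, hpq, hinf⟩ :=
            ih (fun e he => hmem e (List.mem_cons_of_mem _ he)) hsub'
          exact ⟨p, q, hpq, hinf.trans (List.infix_cons (List.infix_refl _))⟩
        · -- d = b : adjacent occurrence at the front
          exact ⟨a, b, hab, [], t', by rw [hc, hd]; rfl⟩

lemma has12_of_sublist {n : ℕ} {a b : Fin n} (hab : a < b) {w : List (Fin n)}
    (h : [a, b] <+ w) : Has12 (subw w a b) := by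
  apply has12_aux hab
  · intro c hc
    have := List.of_mem_filter hc
    simpa using this
  · have : List.filter (fun c => decide (c = a ∨ c = b)) [a, b] = [a, b] := by simp
    calc [a, b] = List.filter (fun c => decide (c = a ∨ c = b)) [a, b] := this.symm
      _ <+ subw w a b := h.filter _

/-- A 12-representable labeled graph contains no induced copy of $I_3$:
if $x<y<z$, $xy,yz\in E$ then $xz\in E$. -/
theorem no_I3_of_rep12 {n : ℕ} (w : List (Fin n)) (G : SimpleGraph (Fin n))
    (hw : Rep12 w G) (x y z : Fin n) (hxy : x < y) (hyz : y < z)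
    (exy : G.Adj x y) (eyz : G.Adj y z) : G.Adj x z := by
  obtain ⟨hall, hedge⟩ := hw
  have hnxy : ¬ Has12 (subw w x y) := (hedge x y (ne_of_lt hxy)).mp exy
  have hnyz : ¬ Has12 (subw w y z) := (hedge y z (ne_of_lt hyz)).mp eyz
  have hxz : x < z := hxy.trans hyz
  refine (hedge x z (ne_of_lt hxz)).mpr ?_
  rintro ⟨a, b, hab, hinf⟩
  -- a, b belong to {x, z}
  have hsub : [a, b] <+ subw w x z := hinf.sublist
  have ha : a = x ∨ a = z := by
    have : a ∈ subw w x z := hsub.mem (by simp)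
    simpa using List.of_mem_filter this
  have hb : b = x ∨ b = z := by
    have : b ∈ subw w x z := hsub.mem (by simp)
    simpa using List.of_mem_filter this
  have hax : a = x := by
    rcases ha with h | h
    · exact h
    · exfalso; rcases hb with h' | h'
      · exact absurd (hab.trans_le (h' ▸ hxz.le)) (by simp [h])
      · exact absurd hab (by simp [h, h'])
  have hbz : b = z := by
    rcases hb with h' | h'
    · exact absurd hab (by simp [hax, h', asymm hxz, ne_of_gt hxz])
    · exact h'
  rw [hax, hbz] at hsub
  -- so [x, z] <+ w
  have hxzw : [x, z] <+ w := hsub.trans List.filter_sublist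
  obtain ⟨r₁, r₂, hsplit, hx1, hz2⟩ := List.cons_sublist_iff.mp hxzw
  have hz : z ∈ r₂ := List.singleton_sublist.mp hz2
  have hy : y ∈ r₁ ++ r₂ := hsplit ▸ hall y
  rcases List.mem_append.mp hy with h | h
  · -- y before z : [y, z] <+ w
    have : [y, z] <+ w := by
      rw [hsplit]
      exact List.Sublist.append (List.singleton_sublist.mpr h)
        (List.singleton_sublist.mpr hz)
    exact hnyz (has12_of_sublist hyz this)
  · -- x before y : [x, y] <+ w
    have : [x, y] <+ w := by
      rw [hsplit]
      exact List.Sublist.append (List.singleton_sublist.mpr hx1)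
        (List.singleton_sublist.mpr h)
    exact hnxy (has12_of_sublist hxy this)
end

section
/- If a word w over [n] with A(w) = [n] 12-represents a labeled graph G, then G contains no induced subgraph on four vertices a < b < c < d whose only edges are ac and bd (the pattern J_4). -/
open List

lemma pair_sublist_of_getElem {α : Type*} {w : List α} {i j : ℕ}
    (hij : i < j) (hj : j < w.length) : [w[i]'(hij.trans hj), w[j]] <+ w := by
  have hi : i < w.length := hij.trans hj
  conv_rhs => rw [← List.take_append_drop (i+1) w]
  have h1 : [w[i]] <+ w.take (i+1) := by
    rw [List.singleton_sublist, List.mem_iff_getElem]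
    exact ⟨i, by rw [List.length_take]; omega, by rw [List.getElem_take]⟩
  have h2 : [w[j]] <+ w.drop (i+1) := by
    rw [List.singleton_sublist, List.mem_iff_getElem]
    refine ⟨j - (i+1), by rw [List.length_drop]; omega, ?_⟩
    rw [List.getElem_drop]
    congr 1
    omega
  exact h1.append h2

lemma getElem_of_pair_sublist {α : Type*} {w : List α} {x y : α}
    (h : [x, y] <+ w) : ∃ i j : ℕ, ∃ hj : j < w.length, ∃ hi : i < w.length,
      i < j ∧ w[i] = x ∧ w[j] = y := by
  induction w with
  | nil => simp at h
  | cons hd t ih =>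
    rcases List.cons_sublist_cons'.mp h with h' | ⟨rfl, h'⟩
    · obtain ⟨i, j, hj, hi, hij, hx, hy⟩ := ih h'
      exact ⟨i+1, j+1, by simpa using hj, by simpa using hi, by omega, by simpa using hx,
        by simpa using hy⟩
    · rw [List.singleton_sublist, List.mem_iff_getElem] at h'
      obtain ⟨k, hk, hky⟩ := h'
      exact ⟨0, k+1, by simpa using hk, by simp, by omega, rfl, by simpa using hky⟩

lemma pair_infix {α : Type*} {x y : α} (hne : x ≠ y) :
    ∀ (s : List α), (∀ z ∈ s, z = x ∨ z = y) → [x, y] <+ s → [x, y] <:+: s := by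
  intro s
  induction s with
  | nil => intro _ h; simp at h
  | cons hd t ih =>
    intro hmem h
    rcases List.cons_sublist_cons'.mp h with h' | ⟨rfl, h'⟩
    · exact List.infix_cons (ih (fun z hz => hmem z (List.mem_cons_of_mem _ hz)) h')
    · rw [List.singleton_sublist] at h'
      match t, h' with
      | b :: t', hy =>
        rcases hmem b (by simp) with hb | hb
        · have hyt' : y ∈ t' := by
            rcases List.mem_cons.mp hy with h | h
            · exact absurd (h.trans hb).symm hne
            · exact h
          have : [x, y] <+ b :: t' := by
            rw [hb]
            exact List.cons_sublist_cons.mpr (List.singleton_sublist.mpr hyt')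
          exact List.infix_cons (ih (fun z hz => hmem z (List.mem_cons_of_mem _ hz)) this)
        · exact ⟨[], t', by simp [hb]⟩

lemma has12_iff {n : ℕ} (w : List (Fin n)) {x y : Fin n} (hxy : x < y) :
    Has12 (subw w x y) ↔ [x, y] <+ w := by
  constructor
  · rintro ⟨p, q, hpq, hinf⟩
    have hsub := hinf.sublist
    have hmem : ∀ z ∈ subw w x y, z = x ∨ z = y := by
      intro z hz
      simpa using (List.mem_filter.mp hz).2
    have hp : p = x ∨ p = y := hmem p (hsub.subset (by simp))
    have hq : q = x ∨ q = y := hmem q (hsub.subset (by simp))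
    have hpx : p = x ∧ q = y := by
      rcases hp with rfl | rfl <;> rcases hq with rfl | rfl
      · exact absurd hpq (lt_irrefl _)
      · exact ⟨rfl, rfl⟩
      · exact absurd (hpq.trans hxy) (lt_irrefl _)
      · exact absurd hpq (lt_irrefl _)
    obtain ⟨rfl, rfl⟩ := hpx
    exact hsub.trans List.filter_sublist
  · intro h
    have h2 : [x, y] <+ subw w x y := by
      have := h.filter (fun a => decide (a = x ∨ a = y))
      simpa [subw] using this
    have hmem : ∀ z ∈ subw w x y, z = x ∨ z = y := by
      intro z hz
      simpa using (List.mem_filter.mp hz).2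
    exact ⟨x, y, hxy, pair_infix hxy.ne (subw w x y) hmem h2⟩

lemma pair_sublist_of_getElem' {α : Type*} {w : List α} {i j : ℕ} {x y : α}
    (hij : i < j) (hj : j < w.length) (hx : w[i]'(hij.trans hj) = x) (hy : w[j] = y) :
    [x, y] <+ w := hx ▸ hy ▸ pair_sublist_of_getElem hij hj

/-- A 12-representable labeled graph contains no induced copy of $J_4$:
four vertices $a<b<c<d$ whose only edges are $ac$ and $bd$. -/
theorem no_J4_of_rep12 {n : ℕ} (w : List (Fin n)) (G : SimpleGraph (Fin n))
    (hw : Rep12 w G) (a b c d : Fin n) (hab : a < b) (hbc : b < c) (hcd : c < d)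
    (eac : G.Adj a c) (ebd : G.Adj b d)
    (nab : ¬ G.Adj a b) (nad : ¬ G.Adj a d) (nbc : ¬ G.Adj b c) (ncd : ¬ G.Adj c d) :
    False := by
  obtain ⟨-, hrep⟩ := hw
  have hac : a < c := hab.trans hbc
  have hbd : b < d := hbc.trans hcd
  have had : a < d := hac.trans hcd
  have hAD : [a, d] <+ w := by
    rw [← has12_iff w had]
    by_contra h
    exact nad ((hrep a d had.ne).mpr h)
  have hBC : [b, c] <+ w := by
    rw [← has12_iff w hbc]
    by_contra h
    exact nbc ((hrep b c hbc.ne).mpr h)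
  have hNac : ¬ [a, c] <+ w := by
    rw [← has12_iff w hac]
    exact (hrep a c hac.ne).mp eac
  have hNbd : ¬ [b, d] <+ w := by
    rw [← has12_iff w hbd]
    exact (hrep b d hbd.ne).mp ebd
  obtain ⟨p, q, hq, hp, hpq, hwa, hwd⟩ := getElem_of_pair_sublist hAD
  obtain ⟨i, j, hj, hi, hij, hwb, hwc⟩ := getElem_of_pair_sublist hBC
  rcases lt_or_ge j q with h | h
  · exact hNbd (pair_sublist_of_getElem' (hij.trans h) hq hwb hwd)
  · have hqj : q < j := lt_of_le_of_ne h fun e => hcd.ne (by subst e; rw [← hwc, hwd])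
    exact hNac (pair_sublist_of_getElem' (hpq.trans hqj) hj hwa hwc)
end

section
/- If a word w over [n] with A(w) = [n] 12-represents a labeled graph G, then G contains no induced subgraph on four vertices a < b < c < d whose only edges are ad and bc (the pattern Q_4). -/
open List

open List in
lemma mem_subw {n : ℕ} {w : List (Fin n)} {x y z : Fin n} (h : z ∈ subw w x y) :
    z = x ∨ z = y := by
  have := (List.mem_filter.mp h).2
  simpa using this

/-- In a word over a two-letter alphabet, a sublist [x,y] yields a factor [x,y]. -/
lemma infix_of_sublist_two {n : ℕ} {x y : Fin n} (hxy : x ≠ y) :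
    ∀ s : List (Fin n), (∀ z ∈ s, z = x ∨ z = y) → [x, y] <+ s → [x, y] <:+: s := by
  intro s
  induction s with
  | nil => intro _ h; simp at h
  | cons z t ih =>
    intro hmem hsub
    rcases List.sublist_cons_iff.mp hsub with h | ⟨r, hr, h⟩
    · exact List.infix_cons (ih (fun u hu => hmem u (List.mem_cons_of_mem _ hu)) h)
    · injection hr with h1 h2
      subst z
      subst h2
      -- h : [y] <+ t
      cases t with
      | nil => simp at h
      | cons u t' =>
        rcases hmem u (by simp) with hu | hu
        · subst u
          have h' : [y] <+ t' := by
            rcases List.sublist_cons_iff.mp h with h2 | ⟨r', hr', h2⟩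
            · exact h2
            · injection hr' with h3 _
              exact absurd h3 hxy.symm
          have : [x, y] <:+: x :: t' :=
            ih (fun v hv => hmem v (List.mem_cons_of_mem _ hv))
              (List.Sublist.cons₂ x h')
          exact List.infix_cons this
        · subst u
          exact ⟨[], t', by simp⟩

lemma pair_sublist_of_indices {n : ℕ} {x y : Fin n} :
    ∀ (w : List (Fin n)) (i j : ℕ), i < j → w[i]? = some x → w[j]? = some y →
      [x, y] <+ w := by
  intro w
  induction w with
  | nil => intro i j _ h; simp at h
  | cons z t ih =>
    intro i j hij hx hy
    obtain ⟨j', rfl⟩ : ∃ j', j = j' + 1 := ⟨j - 1, by omega⟩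
    have hy' : t[j']? = some y := by simpa using hy
    cases i with
    | zero =>
      have hz : z = x := by simpa using hx
      subst hz
      have : y ∈ t := by
        have := List.getElem?_eq_some_iff.mp hy'
        obtain ⟨hlt, hget⟩ := this
        exact hget ▸ List.getElem_mem hlt
      exact List.Sublist.cons₂ z (List.singleton_sublist.mpr this)
    | succ i' =>
      have hx' : t[i']? = some x := by simpa using hx
      exact (ih i' j' (by omega) hx' hy').cons z

lemma indices_of_pair_sublist {n : ℕ} {x y : Fin n} :
    ∀ (w : List (Fin n)), [x, y] <+ w →
      ∃ i j : ℕ, i < j ∧ w[i]? = some x ∧ w[j]? = some y := by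
  intro w
  induction w with
  | nil => intro h; simp at h
  | cons z t ih =>
    intro hsub
    cases hsub with
    | cons _ h =>
      obtain ⟨i, j, hij, hx, hy⟩ := ih h
      exact ⟨i + 1, j + 1, by omega, by simpa using hx, by simpa using hy⟩
    | cons_cons _ h =>
      have : y ∈ t := List.singleton_sublist.mp h
      obtain ⟨j, hj⟩ := List.getElem?_of_mem this
      exact ⟨0, j + 1, by omega, by simp, by simpa using hj⟩

/-- A non-edge gives a sublist [x,y] of w. -/
lemma sublist_of_has12 {n : ℕ} {w : List (Fin n)} {x y : Fin n} (hxy : x < y)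
    (h : Has12 (subw w x y)) : [x, y] <+ w := by
  obtain ⟨p, q, hpq, hinf⟩ := h
  have hp : p ∈ subw w x y := hinf.subset (by simp)
  have hq : q ∈ subw w x y := hinf.subset (by simp)
  have hpx : p = x := by
    rcases mem_subw hp with h1 | h1
    · exact h1
    · exfalso
      rcases mem_subw hq with h2 | h2
      · subst h1; subst h2; exact absurd (hpq.trans hxy) (lt_irrefl _)
      · subst h1; subst h2; exact lt_irrefl _ hpq
  have hqy : q = y := by
    subst hpx
    rcases mem_subw hq with h2 | h2
    · subst h2; exact absurd hpq (lt_irrefl _)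
    · exact h2
  subst hpx; subst hqy
  exact hinf.sublist.trans List.filter_sublist

/-- An edge forbids the sublist [x,y] of w. -/
lemma not_sublist_of_edge {n : ℕ} {w : List (Fin n)} {x y : Fin n} (hxy : x < y)
    (h : ¬ Has12 (subw w x y)) : ¬ [x, y] <+ w := by
  intro hsub
  apply h
  have h1 : [x, y] <+ subw w x y := by
    have := hsub.filter (fun a => decide (a = x ∨ a = y))
    simpa [subw] using this
  exact ⟨x, y, hxy, infix_of_sublist_two hxy.ne _ (fun z hz => mem_subw hz) h1⟩

/-- A 12-representable labeled graph contains no induced copy of $Q_4$: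
four vertices $a<b<c<d$ whose only edges are $ad$ and $bc$. -/
theorem no_Q4_of_rep12 {n : ℕ} (w : List (Fin n)) (G : SimpleGraph (Fin n))
    (hw : Rep12 w G) (a b c d : Fin n) (hab : a < b) (hbc : b < c) (hcd : c < d)
    (ead : G.Adj a d) (ebc : G.Adj b c)
    (nab : ¬ G.Adj a b) (nac : ¬ G.Adj a c) (nbd : ¬ G.Adj b d) (ncd : ¬ G.Adj c d) :
    False := by
  have hrep := hw.2
  have had : a < d := hab.trans (hbc.trans hcd)
  have hac : a < c := hab.trans hbc
  have hbd : b < d := hbc.trans hcd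
  -- edges: no [a,d] and no [b,c] sublists
  have hAD : ¬ [a, d] <+ w :=
    not_sublist_of_edge had ((hrep a d had.ne).mp ead)
  have hBC : ¬ [b, c] <+ w :=
    not_sublist_of_edge hbc ((hrep b c hbc.ne).mp ebc)
  -- non-edges: [a,c] and [b,d] sublists
  have hAC : [a, c] <+ w :=
    sublist_of_has12 hac ((hrep a c hac.ne).not_left.mp nac)
  have hBD : [b, d] <+ w :=
    sublist_of_has12 hbd ((hrep b d hbd.ne).not_left.mp nbd)
  obtain ⟨r, s, hrs, hr, hs⟩ := indices_of_pair_sublist w hAC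
  obtain ⟨u, v, huv, hu, hv⟩ := indices_of_pair_sublist w hBD
  have hvr : v < r := by
    rcases lt_trichotomy r v with h | h | h
    · exact absurd (pair_sublist_of_indices w r v h hr hv) hAD
    · exfalso
      rw [h, hv] at hr
      exact had.ne' (Option.some_injective _ hr)
    · exact h
  exact hBC (pair_sublist_of_indices w u s (by omega) hu hs)
end

section
/- Let G be a bipartite graph with bipartition (X,Y) and with a model of intervals I_v = [ℓ_v, r_v], all 2n endpoints distinct, such that for x ∈ X, y ∈ Y: xy ∈ E(G) iff I_x ⊇ I_y. For x ∈ X and y ∈ Y with ℓ_x < ℓ_y, the word w_{{x,y}} formed as in the construction w = π_y π_r π_x (labels by left-endpoint rank, π_r listing labels by right endpoints left to right, π_x and π_y arbitrary orderings of X-labels and Y-labels) has no 12-match if and only if I_x contains I_y; equivalently, w_{{x,y}} equals jjii when r_x > r_y and jiji when r_x < r_y, where i, j are the labels of x, y with i < j. -/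
lemma filter_single {n : ℕ} (x y : Fin n) :
    ∀ (l : List (Fin n)), l.Nodup → x ∉ l → y ∈ l →
    l.filter (fun a => decide (a = x ∨ a = y)) = [y] := by
  intro l
  induction l with
  | nil => simp
  | cons a l ih =>
    intro hnd hx hy
    have hxl : x ∉ l := fun h => hx (List.mem_cons_of_mem _ h)
    by_cases hay : a = y
    · subst hay
      have hyl : a ∉ l := (List.nodup_cons.mp hnd).1
      have hnil : l.filter (fun b => decide (b = x ∨ b = a)) = [] := by
        rw [List.filter_eq_nil_iff]
        intro b hb
        simp only [decide_eq_true_eq]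
        push_neg
        exact ⟨fun h => hxl (h ▸ hb), fun h => hyl (h ▸ hb)⟩
      rw [List.filter_cons_of_pos (by simp), hnil]
    · have hax : a ≠ x := fun h => hx (h ▸ (List.mem_cons_self : a ∈ a :: l))
      have hyl : y ∈ l := by
        rcases List.mem_cons.mp hy with h | h
        · exact absurd h.symm hay
        · exact h
      rw [List.filter_cons_of_neg (by simp [hax, hay])]
      exact ih (List.nodup_cons.mp hnd).2 hxl hyl

lemma filter_pair {n : ℕ} (x y : Fin n) (hxy : x ≠ y) :
    ∀ (l : List (Fin n)), l.Nodup → x ∈ l → y ∈ l →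
    l.filter (fun a => decide (a = x ∨ a = y)) = [x, y] ∨
    l.filter (fun a => decide (a = x ∨ a = y)) = [y, x] := by
  intro l
  induction l with
  | nil => simp
  | cons a l ih =>
    intro hnd hx hy
    by_cases hax : a = x
    · subst hax
      have hxl : a ∉ l := (List.nodup_cons.mp hnd).1
      have hyl : y ∈ l := by
        rcases List.mem_cons.mp hy with h | h
        · exact absurd h.symm hxy
        · exact h
      have h1 : l.filter (fun b => decide (b = a ∨ b = y)) = [y] :=
        filter_single a y l (List.nodup_cons.mp hnd).2 hxl hyl
      left
      rw [List.filter_cons_of_pos (by simp), h1]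
    · by_cases hay : a = y
      · subst hay
        have hyl : a ∉ l := (List.nodup_cons.mp hnd).1
        have hxl : x ∈ l := by
          rcases List.mem_cons.mp hx with h | h
          · exact absurd h.symm hax
          · exact h
        have h1 : l.filter (fun b => decide (b = x ∨ b = a)) = [x] := by
          have h2 := filter_single a x l (List.nodup_cons.mp hnd).2 hyl hxl
          rw [← h2]
          apply List.filter_congr
          intro b _
          simp [or_comm]
        right
        rw [List.filter_cons_of_pos (by simp), h1]
      · have hxl : x ∈ l := by
          rcases List.mem_cons.mp hx with h | h
          · exact absurd h.symm hax
          · exact h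
        have hyl : y ∈ l := by
          rcases List.mem_cons.mp hy with h | h
          · exact absurd h.symm hay
          · exact h
        rw [List.filter_cons_of_neg (by simp [hax, hay])]
        exact ih (List.nodup_cons.mp hnd).2 hxl hyl

lemma filter_single' {n : ℕ} (x y : Fin n) (l : List (Fin n)) (hnd : l.Nodup)
    (hy : y ∉ l) (hx : x ∈ l) :
    l.filter (fun a => decide (a = x ∨ a = y)) = [x] := by
  have h2 := filter_single y x l hnd hy hx
  rw [← h2]
  apply List.filter_congr
  intro b _
  simp [or_comm]

lemma no12_yyxx {n : ℕ} (x y : Fin n) (hxy : x < y) : ¬ Has12 [y, y, x, x] := by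
  rintro ⟨a, b, hab, s, t, heq⟩
  rcases s with _ | ⟨c, _ | ⟨d, _ | ⟨e, s⟩⟩⟩ <;>
    simp only [List.cons_append, List.nil_append, List.cons.injEq] at heq
  · obtain ⟨h1, h2, -⟩ := heq
    subst h1; subst h2
    exact lt_irrefl _ hab
  · obtain ⟨-, h1, h2, -⟩ := heq
    subst h1; subst h2
    exact absurd hab (lt_asymm hxy)
  · obtain ⟨-, -, h1, h2, -⟩ := heq
    subst h1; subst h2
    exact lt_irrefl _ hab
  · obtain ⟨-, -, -, h⟩ := heq
    have := congrArg List.length h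
    simp at this
    omega

/-- In the construction `w = πy ++ πr ++ πx` for an interval containment bigraph
(vertices labeled by left-endpoint rank, i.e. `ℓ` strictly monotone), for `x ∈ X`
and `y ∉ X` with `ℓ x < ℓ y` (so the label `x` is smaller than the label `y`):
`w_{{x,y}}` has no 12-match iff `I_x ⊇ I_y`; concretely `w_{{x,y}} = yyxx` when
`r y < r x` and `w_{{x,y}} = yxyx` when `r x < r y`. -/
theorem subword_analysis_ICB {n : ℕ} (X : Set (Fin n))
    (ℓ r : Fin n → ℝ)
    (hlr : ∀ v, ℓ v < r v)
    (hmono : StrictMono ℓ)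
    (hrinj : Function.Injective r)
    (hlne : ∀ u v, ℓ u ≠ r v)
    (πr : List (Fin n)) (hπr : πr.Pairwise fun u v => r u < r v)
    (hπrm : ∀ v, v ∈ πr)
    (πx : List (Fin n)) (hπx : πx.Nodup) (hπxm : ∀ v, v ∈ πx ↔ v ∈ X)
    (πy : List (Fin n)) (hπy : πy.Nodup) (hπym : ∀ v, v ∈ πy ↔ v ∉ X)
    (x y : Fin n) (hx : x ∈ X) (hy : y ∉ X) (hxy : ℓ x < ℓ y) :
    (¬ Has12 (subw (πy ++ πr ++ πx) x y) ↔ r y < r x) ∧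
    (r y < r x → subw (πy ++ πr ++ πx) x y = [y, y, x, x]) ∧
    (r x < r y → subw (πy ++ πr ++ πx) x y = [y, x, y, x]) := by
  have hne : x ≠ y := fun h => hy (h ▸ hx)
  have hxy' : x < y := hmono.lt_iff_lt.mp hxy
  have e1 : πy.filter (fun a => decide (a = x ∨ a = y)) = [y] :=
    filter_single x y πy hπy (fun h => (hπym x).mp h hx) ((hπym y).mpr hy)
  have e2 : πx.filter (fun a => decide (a = x ∨ a = y)) = [x] :=
    filter_single' x y πx hπx (fun h => hy ((hπxm y).mp h)) ((hπxm x).mpr hx)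
  have hnodr : πr.Nodup := (hπr.imp fun h => ne_of_apply_ne r h.ne)
  have hsub : subw (πy ++ πr ++ πx) x y =
      πy.filter (fun a => decide (a = x ∨ a = y)) ++
      πr.filter (fun a => decide (a = x ∨ a = y)) ++
      πx.filter (fun a => decide (a = x ∨ a = y)) := by
    simp only [subw, List.filter_append]
  have hpair := filter_pair x y hne πr hnodr (hπrm x) (hπrm y)
  have hpw : (πr.filter (fun a => decide (a = x ∨ a = y))).Pairwise
      (fun u v => r u < r v) := List.Pairwise.sublist List.filter_sublist hπr
  rcases hpair with hmid | hmid
  · -- mid = [x, y], so r x < r y, word = [y, x, y, x]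
    rw [hmid] at hpw
    have hrlt : r x < r y := by
      simpa using hpw
    have hword : subw (πy ++ πr ++ πx) x y = [y, x, y, x] := by
      rw [hsub, e1, e2, hmid]; rfl
    refine ⟨?_, ?_, fun _ => hword⟩
    · constructor
      · intro hno
        exfalso
        exact hno ⟨x, y, hxy', [y], [x], by rw [hword]; rfl⟩
      · intro h
        exact absurd h (lt_asymm hrlt)
    · intro h
      exact absurd h (lt_asymm hrlt)
  · -- mid = [y, x], so r y < r x, word = [y, y, x, x]
    rw [hmid] at hpw
    have hrlt : r y < r x := by
      simpa using hpw
    have hword : subw (πy ++ πr ++ πx) x y = [y, y, x, x] := by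
      rw [hsub, e1, e2, hmid]; rfl
    refine ⟨⟨fun _ => hrlt, fun _ => ?_⟩, fun _ => hword, fun h => absurd h (lt_asymm hrlt)⟩
    rw [hword]
    exact no12_yyxx x y hxy'
end

section
/- Every graph that admits an {I_3, J_4, Q_4}-free labeling is 12-representable, and moreover a 12-representant of length 2n can be constructed. (Equivalently, combining with the necessary condition: a graph is 12-representable if and only if it admits an {I_3, J_4, Q_4}-free labeling.) -/
/-- A labeled graph on `Fin n` is $\{I_3, J_4, Q_4\}$-free. -/
def I3J4Q4Free {n : ℕ} (G : SimpleGraph (Fin n)) : Prop :=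
  (¬ ∃ a b c : Fin n, a < b ∧ b < c ∧ G.Adj a b ∧ G.Adj b c ∧ ¬ G.Adj a c) ∧
  (¬ ∃ a b c d : Fin n, a < b ∧ b < c ∧ c < d ∧
    G.Adj a c ∧ G.Adj b d ∧ ¬ G.Adj a b ∧ ¬ G.Adj a d ∧ ¬ G.Adj b c ∧ ¬ G.Adj c d) ∧
  (¬ ∃ a b c d : Fin n, a < b ∧ b < c ∧ c < d ∧
    G.Adj a d ∧ G.Adj b c ∧ ¬ G.Adj a b ∧ ¬ G.Adj a c ∧ ¬ G.Adj b d ∧ ¬ G.Adj c d)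

set_option linter.unusedSectionVars false

namespace Rep12Aux

/-- If every element of `v` is `x` or `y` and `y ∈ v`, then `[x,y]` is an infix of `x :: v`. -/
lemma infix_pair_of_mem_two {α : Type*} {x y : α} :
    ∀ (v : List α), (∀ a ∈ v, a = x ∨ a = y) → y ∈ v → [x, y] <:+: x :: v := by
  intro v
  induction v with
  | nil => intro _ h; simp at h
  | cons a v ih =>
    intro hall hy
    by_cases hay : a = y
    · exact ⟨[], v, by simp [hay]⟩
    · have hax : a = x := (hall a (by simp)).resolve_right hay
      have hyv : y ∈ v := by
        rcases List.mem_cons.1 hy with h | h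
        · exact absurd h.symm hay
        · exact h
      have h1 : [x, y] <:+: x :: v := ih (fun b hb => hall b (List.mem_cons_of_mem _ hb)) hyv
      have h2 : (x :: v) <:+: x :: a :: v := ⟨[x], [], by simp [hax]⟩
      exact h1.trans h2

lemma sep_of_infix_filter {α : Type*} {x y : α} {q : α → Bool} :
    ∀ (w : List α), [x, y] <:+: w.filter q → ∃ u v, w = u ++ x :: v ∧ y ∈ v := by
  intro w
  induction w with
  | nil => intro h; simp [List.eq_nil_of_infix_nil] at h
  | cons a w ih =>
    intro h
    by_cases hqa : q a
    · rw [List.filter_cons_of_pos hqa] at h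
      rcases List.infix_cons_iff.1 h with hp | hi
      · obtain ⟨t, ht⟩ := hp
        simp only [List.cons_append, List.nil_append] at ht
        obtain ⟨hax, ht2⟩ := List.cons_eq_cons.1 ht
        have hyw : y ∈ w := List.mem_of_mem_filter (ht2 ▸ (List.mem_cons_self : y ∈ y :: t))
        exact ⟨[], w, by simp [hax], hyw⟩
      · obtain ⟨u, v, huv, hyv⟩ := ih hi
        exact ⟨a :: u, v, by simp [huv], hyv⟩
    · rw [List.filter_cons_of_neg hqa] at h
      obtain ⟨u, v, huv, hyv⟩ := ih h
      exact ⟨a :: u, v, by simp [huv], hyv⟩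

lemma before_of_sorted {α : Type*} {p : α → ℤ} :
    ∀ {t : List α}, t.Pairwise (fun e f => p e ≤ p f) → ∀ {e f}, e ∈ t → f ∈ t →
      p e < p f → ∃ u v, t = u ++ e :: v ∧ f ∈ v := by
  intro t
  induction t with
  | nil => intro _ e f he; simp at he
  | cons a t ih =>
    intro hpw e f he hf hlt
    have ha := (List.pairwise_cons.1 hpw).1
    have ht := (List.pairwise_cons.1 hpw).2
    rcases List.mem_cons.1 he with rfl | he'
    · rcases List.mem_cons.1 hf with rfl | hf'
      · exact absurd hlt (lt_irrefl _)
      · exact ⟨[], t, rfl, hf'⟩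
    · rcases List.mem_cons.1 hf with rfl | hf'
      · exact absurd hlt (not_lt.2 (ha e he'))
      · obtain ⟨u, v, huv, hv⟩ := ih ht he' hf' hlt
        exact ⟨a :: u, v, by simp [huv], hv⟩

lemma exists_pair_of_infix_map {α β : Type*} {g : α → β} {x y : β} :
    ∀ (t : List α), [x, y] <:+: t.map g → ∃ e f, g e = x ∧ g f = y ∧ [e, f] <:+: t := by
  intro t
  induction t with
  | nil => intro h; simp [List.eq_nil_of_infix_nil] at h
  | cons a t ih =>
    intro h
    rw [List.map_cons] at h
    rcases List.infix_cons_iff.1 h with hp | hi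
    · obtain ⟨r, hr⟩ := hp
      simp only [List.cons_append, List.nil_append] at hr
      obtain ⟨hax, hr2⟩ := List.cons_eq_cons.1 hr
      cases t with
      | nil => simp at hr2
      | cons b t' =>
        simp only [List.map_cons] at hr2
        obtain ⟨hby, -⟩ := List.cons_eq_cons.1 hr2
        exact ⟨a, b, hax.symm, hby.symm, ⟨[], t', by simp⟩⟩
    · obtain ⟨e, f, h1, h2, h3⟩ := ih hi
      exact ⟨e, f, h1, h2, h3.trans (List.infix_cons (List.infix_refl _))⟩

lemma rel_of_infix_pair {α : Type*} {e f : α} {r : α → α → Prop} {t : List α}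
    (h : [e, f] <:+: t) (hp : t.Pairwise r) : r e f := by
  have := hp.sublist h.sublist
  exact (List.pairwise_cons.1 this).1 f (by simp)

end Rep12Aux

namespace Rep12Aux

variable {n : ℕ}

/-- Some occurrence of `x` lies strictly before some occurrence of `y`. -/
def Bef (w : List (Fin n)) (x y : Fin n) : Prop :=
  ∃ u v, w = u ++ x :: v ∧ y ∈ v

lemma bef_of_idx {w : List (Fin n)} {x y : Fin n} {i j : ℕ}
    (hi : i < w.length) (hj : j < w.length) (hij : i < j)
    (hx : w[i] = x) (hy : w[j] = y) : Bef w x y := by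
  refine ⟨w.take i, w.drop (i + 1), ?_, ?_⟩
  · conv_lhs => rw [← List.take_append_drop i w]
    rw [List.drop_eq_getElem_cons hi, hx]
  · have hj' : j - (i + 1) < (w.drop (i + 1)).length := by
      rw [List.length_drop]; omega
    have : (w.drop (i + 1))[j - (i + 1)] = w[j] := by
      rw [List.getElem_drop]
      congr 1
      omega
    rw [← hy, ← this]
    exact List.getElem_mem hj'

lemma idx_of_bef {w : List (Fin n)} {x y : Fin n} (h : Bef w x y) :
    ∃ i j, ∃ (hi : i < w.length) (hj : j < w.length),
      i < j ∧ w[i] = x ∧ w[j] = y := by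
  obtain ⟨u, v, rfl, hyv⟩ := h
  obtain ⟨k, hk, hkv⟩ := List.mem_iff_getElem.1 hyv
  have hlen : (u ++ x :: v).length = u.length + 1 + v.length := by
    simp [List.length_append]; omega
  refine ⟨u.length, u.length + 1 + k, by omega, by omega, by omega, ?_, ?_⟩
  · rw [List.getElem_append_right (le_refl u.length)]
    simp
  · rw [List.getElem_append_right (by omega : u.length ≤ u.length + 1 + k)]
    have h1 : u.length + 1 + k - u.length = k + 1 := by omega
    simp only [h1, List.getElem_cons_succ]
    exact hkv

/-- `¬ Bef` is a strong statement: every occurrence of `y` is before every occurrence of `x`. -/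
lemma lt_of_not_bef {w : List (Fin n)} {x y : Fin n} (hxy : x ≠ y) (h : ¬ Bef w x y)
    {i j : ℕ} (hi : i < w.length) (hj : j < w.length)
    (hx : w[i] = x) (hy : w[j] = y) : j < i := by
  rcases lt_trichotomy i j with hlt | rfl | hgt
  · exact absurd (bef_of_idx hi hj hlt hx hy) h
  · exact absurd (hx.symm.trans hy) hxy
  · exact hgt

lemma mem_two_of_mem_subw {w : List (Fin n)} {x y a : Fin n}
    (h : a ∈ subw w x y) : a = x ∨ a = y := by
  have := (List.mem_filter.1 h).2
  simpa using this

lemma has12_of_bef {w : List (Fin n)} {x y : Fin n} (hxy : x < y)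
    (h : Bef w x y) : Has12 (subw w x y) := by
  obtain ⟨u, v, rfl, hyv⟩ := h
  refine ⟨x, y, hxy, ?_⟩
  have hx : (fun a => decide (a = x ∨ a = y)) x = true := by simp
  have hsub : subw (u ++ x :: v) x y
      = (u.filter fun a => decide (a = x ∨ a = y)) ++ x :: subw v x y := by
    simp [subw, List.filter_append, List.filter_cons, hx]
  rw [hsub]
  have hpair : [x, y] <:+: x :: subw v x y := by
    apply infix_pair_of_mem_two
    · exact fun a ha => mem_two_of_mem_subw ha
    · exact List.mem_filter.2 ⟨hyv, by simp⟩
  obtain ⟨s, t, hst⟩ := hpair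
  exact ⟨(u.filter fun a => decide (a = x ∨ a = y)) ++ s, t, by rw [← hst]; simp⟩

lemma infix_xy_of_has12 {w : List (Fin n)} {x y : Fin n} (hxy : x < y)
    (h : Has12 (subw w x y)) : [x, y] <:+: subw w x y := by
  obtain ⟨a, b, hab, hinf⟩ := h
  have haxy : a = x ∨ a = y := mem_two_of_mem_subw (hinf.subset (by simp))
  have hbxy : b = x ∨ b = y := mem_two_of_mem_subw (hinf.subset (by simp))
  have hax : a = x ∧ b = y := by
    rcases haxy with rfl | rfl <;> rcases hbxy with rfl | rfl
    · exact absurd hab (lt_irrefl _)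
    · exact ⟨rfl, rfl⟩
    · exact absurd (hab.trans hxy) (lt_irrefl _)
    · exact absurd hab (lt_irrefl _)
  obtain ⟨rfl, rfl⟩ := hax
  exact hinf

lemma bef_of_has12 {w : List (Fin n)} {x y : Fin n} (hxy : x < y)
    (h : Has12 (subw w x y)) : Bef w x y := by
  obtain ⟨u, v, huv, hyv⟩ := sep_of_infix_filter w (infix_xy_of_has12 hxy h)
  exact ⟨u, v, huv, hyv⟩

/-- Key characterization: in a 12-representation, for `x < y` adjacency means
no occurrence of `x` before any occurrence of `y`. -/
lemma adj_iff_not_bef {H : SimpleGraph (Fin n)} {w : List (Fin n)}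
    (hrep : Rep12 w H) {x y : Fin n} (hxy : x < y) :
    H.Adj x y ↔ ¬ Bef w x y := by
  rw [hrep.2 x y (ne_of_lt hxy)]
  constructor
  · exact fun h hb => h (has12_of_bef hxy hb)
  · exact fun h h12 => h (bef_of_has12 hxy h12)

theorem nec {H : SimpleGraph (Fin n)} {w : List (Fin n)} (hrep : Rep12 w H) :
    I3J4Q4Free H := by
  have hmem : ∀ z : Fin n, ∃ k, ∃ (hk : k < w.length), w[k] = z := by
    intro z
    exact List.mem_iff_getElem.1 (hrep.1 z)
  refine ⟨?_, ?_, ?_⟩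
  · rintro ⟨a, b, c, hab, hbc, h1, h2, h3⟩
    have nb1 : ¬ Bef w a b := (adj_iff_not_bef hrep hab).1 h1
    have nb2 : ¬ Bef w b c := (adj_iff_not_bef hrep hbc).1 h2
    have hb3 : Bef w a c := by
      by_contra hcon
      exact h3 ((adj_iff_not_bef hrep (hab.trans hbc)).2 hcon)
    obtain ⟨i, j, hi, hj, hij, hwi, hwj⟩ := idx_of_bef hb3
    obtain ⟨k, hk, hwk⟩ := hmem b
    have t1 := lt_of_not_bef (ne_of_lt hab) nb1 hi hk hwi hwk
    have t2 := lt_of_not_bef (ne_of_lt hbc) nb2 hk hj hwk hwj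
    omega
  · rintro ⟨a, b, c, d, hab, hbc, hcd, hac, hbd, -, had, hbc', -⟩
    have nb1 : ¬ Bef w a c := (adj_iff_not_bef hrep (hab.trans hbc)).1 hac
    have nb2 : ¬ Bef w b d := (adj_iff_not_bef hrep (hbc.trans hcd)).1 hbd
    have hb3 : Bef w b c := by
      by_contra hcon
      exact hbc' ((adj_iff_not_bef hrep hbc).2 hcon)
    have hb4 : Bef w a d := by
      by_contra hcon
      exact had ((adj_iff_not_bef hrep ((hab.trans hbc).trans hcd)).2 hcon)
    obtain ⟨i, j, hi, hj, hij, hwi, hwj⟩ := idx_of_bef hb3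
    obtain ⟨m, l, hm, hl, hml, hwm, hwl⟩ := idx_of_bef hb4
    have t1 := lt_of_not_bef (ne_of_lt (hab.trans hbc)) nb1 hm hj hwm hwj
    have t2 := lt_of_not_bef (ne_of_lt (hbc.trans hcd)) nb2 hi hl hwi hwl
    omega
  · rintro ⟨a, b, c, d, hab, hbc, hcd, had, hbc2, -, hac, hbd, -⟩
    have nb1 : ¬ Bef w a d := (adj_iff_not_bef hrep ((hab.trans hbc).trans hcd)).1 had
    have nb2 : ¬ Bef w b c := (adj_iff_not_bef hrep hbc).1 hbc2
    have hb3 : Bef w a c := by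
      by_contra hcon
      exact hac ((adj_iff_not_bef hrep (hab.trans hbc)).2 hcon)
    have hb4 : Bef w b d := by
      by_contra hcon
      exact hbd ((adj_iff_not_bef hrep (hbc.trans hcd)).2 hcon)
    obtain ⟨i, j, hi, hj, hij, hwi, hwj⟩ := idx_of_bef hb3
    obtain ⟨k, l, hk, hl, hkl, hwk, hwl⟩ := idx_of_bef hb4
    have t1 := lt_of_not_bef (ne_of_lt hbc) nb2 hk hj hwk hwj
    have t2 := lt_of_not_bef (ne_of_lt ((hab.trans hbc).trans hcd)) nb1 hi hl hwi hwl
    omega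

end Rep12Aux

namespace Rep12Aux

open Finset

variable {n : ℕ}

lemma sum_range_two_pow : ∀ K : ℕ, ∑ m ∈ Finset.range K, 2 ^ m = 2 ^ K - 1 := by
  intro K
  induction K with
  | zero => simp
  | succ K ih =>
    rw [Finset.sum_range_succ, ih, pow_succ]
    have : 1 ≤ 2 ^ K := Nat.one_le_two_pow
    omega

lemma sum_pow_lt {S T : Finset (Fin n)} {k : Fin n} (hkT : k ∈ T) (hkS : k ∉ S)
    (hsub : ∀ j, k < j → j ∈ S → j ∈ T) :
    ∑ j ∈ S, 2 ^ (j : ℕ) < ∑ j ∈ T, 2 ^ (j : ℕ) := by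
  classical
  have hS : ∑ j ∈ S.filter (fun j => k < j), 2 ^ (j : ℕ)
      + ∑ j ∈ S.filter (fun j => ¬ k < j), 2 ^ (j : ℕ) = ∑ j ∈ S, 2 ^ (j : ℕ) :=
    Finset.sum_filter_add_sum_filter_not S _ _
  have hT : ∑ j ∈ T.filter (fun j => k < j), 2 ^ (j : ℕ)
      + ∑ j ∈ T.filter (fun j => ¬ k < j), 2 ^ (j : ℕ) = ∑ j ∈ T, 2 ^ (j : ℕ) :=
    Finset.sum_filter_add_sum_filter_not T _ _
  have hA : ∑ j ∈ S.filter (fun j => k < j), 2 ^ (j : ℕ)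
      ≤ ∑ j ∈ T.filter (fun j => k < j), 2 ^ (j : ℕ) := by
    apply Finset.sum_le_sum_of_subset
    intro j hj
    rw [Finset.mem_filter] at hj ⊢
    exact ⟨hsub j hj.2 hj.1, hj.2⟩
  have hB : ∑ j ∈ S.filter (fun j => ¬ k < j), 2 ^ (j : ℕ) ≤ 2 ^ (k : ℕ) - 1 := by
    have him : ∑ j ∈ S.filter (fun j => ¬ k < j), 2 ^ (j : ℕ)
        = ∑ m ∈ (S.filter (fun j => ¬ k < j)).image (Fin.val), 2 ^ m := by
      rw [Finset.sum_image]
      intro a _ b _ hab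
      exact Fin.val_injective hab
    rw [him]
    have hsubr : (S.filter (fun j => ¬ k < j)).image (Fin.val) ⊆ Finset.range (k : ℕ) := by
      intro m hm
      rw [Finset.mem_image] at hm
      obtain ⟨j, hj, rfl⟩ := hm
      rw [Finset.mem_filter] at hj
      have hjk : j ≤ k := not_lt.1 hj.2
      have hne : j ≠ k := fun h => hkS (h ▸ hj.1)
      rw [Finset.mem_range]
      exact lt_of_le_of_ne (Fin.le_iff_val_le_val.1 hjk) (fun h => hne (Fin.ext h))
    calc ∑ m ∈ (S.filter (fun j => ¬ k < j)).image (Fin.val), 2 ^ m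
        ≤ ∑ m ∈ Finset.range (k : ℕ), 2 ^ m := Finset.sum_le_sum_of_subset hsubr
      _ = 2 ^ (k : ℕ) - 1 := sum_range_two_pow _
  have hC : 2 ^ (k : ℕ) ≤ ∑ j ∈ T.filter (fun j => ¬ k < j), 2 ^ (j : ℕ) := by
    exact Finset.single_le_sum (f := fun j : Fin n => 2 ^ (j : ℕ))
      (fun i _ => Nat.zero_le _)
      (Finset.mem_filter.2 ⟨hkT, lt_irrefl k⟩)
  have hpos : 1 ≤ 2 ^ (k : ℕ) := Nat.one_le_two_pow
  omega

section Graph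

variable (H : SimpleGraph (Fin n)) [DecidableRel H.Adj]

def phiF (v : Fin n) : ℕ := ∑ k ∈ Finset.univ.filter (fun k => H.Adj v k), 2 ^ (k : ℕ)

def psiF (v : Fin n) : ℕ := phiF H v * 2 ^ n + (v : ℕ)

def SSF (v : Fin n) : Finset (Fin n) := Finset.univ.filter (fun u => u < v ∧ H.Adj u v)

noncomputable def zEF : Fin n × Bool → ℤ := fun e =>
  if e.2 then
    (if h : (SSF H e.1).Nonempty then 2 * ((SSF H e.1).inf' h (psiF H)) - 1
     else 2 ^ (2 * n + 1) + 1)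
  else 2 * psiF H e.1

noncomputable def pEF : Fin n × Bool → ℤ := fun e =>
  zEF H e * (2 * (n : ℤ) + 2) + (2 * (e.1 : ℕ) + (if e.2 then 1 else 0))

variable {H}

lemma psiF_lt_of_phiF {u v : Fin n} (h : phiF H v < phiF H u) : psiF H v < psiF H u := by
  unfold psiF
  have hv : (v : ℕ) < 2 ^ n := lt_of_lt_of_le v.is_lt (Nat.lt_two_pow_self (n := n)).le
  have h1 : phiF H v + 1 ≤ phiF H u := h
  calc phiF H v * 2 ^ n + (v : ℕ) < phiF H v * 2 ^ n + 2 ^ n := by omega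
    _ = (phiF H v + 1) * 2 ^ n := by ring
    _ ≤ phiF H u * 2 ^ n := Nat.mul_le_mul_right _ h1
    _ ≤ phiF H u * 2 ^ n + (u : ℕ) := Nat.le_add_right _ _

lemma psiF_lt_bound (v : Fin n) : psiF H v < 2 ^ (2 * n) := by
  have hphi : phiF H v ≤ 2 ^ n - 1 := by
    unfold phiF
    calc ∑ k ∈ Finset.univ.filter (fun k => H.Adj v k), 2 ^ (k : ℕ)
        ≤ ∑ k ∈ (Finset.univ : Finset (Fin n)), 2 ^ (k : ℕ) :=
          Finset.sum_le_sum_of_subset (Finset.filter_subset _ _)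
      _ = ∑ m ∈ Finset.range n, 2 ^ m := Fin.sum_univ_eq_sum_range _ _
      _ = 2 ^ n - 1 := sum_range_two_pow _
  have hv : (v : ℕ) < 2 ^ n := lt_of_lt_of_le v.is_lt (Nat.lt_two_pow_self (n := n)).le
  have h1 : 1 ≤ 2 ^ n := Nat.one_le_two_pow
  have : 2 ^ (2 * n) = 2 ^ n * 2 ^ n := by rw [two_mul, pow_add]
  unfold psiF
  have h2 : phiF H v * 2 ^ n ≤ (2 ^ n - 1) * 2 ^ n := Nat.mul_le_mul_right _ hphi
  have h3 : (2 ^ n - 1) * 2 ^ n = 2 ^ n * 2 ^ n - 2 ^ n := by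
    rw [Nat.sub_mul, one_mul]
  rw [h3] at h2
  have h4 : 2 ^ n ≤ 2 ^ n * 2 ^ n := Nat.le_mul_of_pos_left _ (by positivity)
  omega

/-- The core combinatorial lemma: pattern-freeness forces `psiF` comparisons. -/
lemma core_psi (h3 : ¬ ∃ a b c : Fin n, a < b ∧ b < c ∧ H.Adj a b ∧ H.Adj b c ∧ ¬ H.Adj a c)
    (h4 : ¬ ∃ a b c d : Fin n, a < b ∧ b < c ∧ c < d ∧
      H.Adj a c ∧ H.Adj b d ∧ ¬ H.Adj a b ∧ ¬ H.Adj a d ∧ ¬ H.Adj b c ∧ ¬ H.Adj c d)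
    (hQ : ¬ ∃ a b c d : Fin n, a < b ∧ b < c ∧ c < d ∧
      H.Adj a d ∧ H.Adj b c ∧ ¬ H.Adj a b ∧ ¬ H.Adj a c ∧ ¬ H.Adj b d ∧ ¬ H.Adj c d)
    {u v k : Fin n} (huk : u < k) (hvk : v ≤ k)
    (hadj : H.Adj u k) (hnadj : ¬ H.Adj v k) : psiF H v < psiF H u := by
  apply psiF_lt_of_phiF
  unfold phiF
  apply sum_pow_lt (k := k)
  · rw [Finset.mem_filter]; exact ⟨Finset.mem_univ _, hadj⟩
  · rw [Finset.mem_filter]; exact fun h => hnadj h.2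
  · intro j hkj hj
    rw [Finset.mem_filter] at hj ⊢
    refine ⟨Finset.mem_univ _, ?_⟩
    have hvj : H.Adj v j := hj.2
    by_contra huj
    rcases eq_or_lt_of_le hvk with rfl | hvk'
    · exact h3 ⟨u, v, j, huk, hkj, hadj, hvj, huj⟩
    · rcases lt_trichotomy v u with hvu | rfl | huv
      · have hvu_n : ¬ H.Adj v u := fun h => h3 ⟨v, u, k, hvu, huk, h, hadj, hnadj⟩
        have hkj_n : ¬ H.Adj k j := fun h => h3 ⟨u, k, j, huk, hkj, hadj, h, huj⟩
        exact hQ ⟨v, u, k, j, hvu, huk, hkj, hvj, hadj, hvu_n, hnadj, huj, hkj_n⟩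
      · exact hnadj hadj
      · have huv_n : ¬ H.Adj u v := fun h =>
          h3 ⟨u, v, j, huv, lt_trans hvk' hkj, h, hvj, huj⟩
        have hkj_n : ¬ H.Adj k j := fun h => h3 ⟨u, k, j, huk, hkj, hadj, h, huj⟩
        exact h4 ⟨u, v, k, j, huv, hvk', hkj, hadj, hvj, huv_n, huj, hnadj, hkj_n⟩

end Graph

end Rep12Aux

namespace Rep12Aux

open Finset

variable {n : ℕ} {H : SimpleGraph (Fin n)} [DecidableRel H.Adj]

lemma zEF_false (v : Fin n) : zEF H (v, false) = 2 * psiF H v := rfl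

lemma zEF_true (v : Fin n) : zEF H (v, true)
    = if h : (SSF H v).Nonempty then 2 * (((SSF H v).inf' h (psiF H) : ℕ) : ℤ) - 1
      else (2 : ℤ) ^ (2 * n + 1) + 1 := rfl

lemma zEF_big_bound (v : Fin n) : zEF H (v, false) < 2 ^ (2 * n + 1) + 1 := by
  have h := psiF_lt_bound (H := H) v
  have h2 : ((psiF H v : ℤ)) < 2 ^ (2 * n) := by exact_mod_cast h
  have h3 : (2 : ℤ) ^ (2 * n + 1) = 2 * 2 ^ (2 * n) := by ring
  rw [zEF_false]
  omega

section Free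

variable (h3 : ¬ ∃ a b c : Fin n, a < b ∧ b < c ∧ H.Adj a b ∧ H.Adj b c ∧ ¬ H.Adj a c)
  (h4 : ¬ ∃ a b c d : Fin n, a < b ∧ b < c ∧ c < d ∧
    H.Adj a c ∧ H.Adj b d ∧ ¬ H.Adj a b ∧ ¬ H.Adj a d ∧ ¬ H.Adj b c ∧ ¬ H.Adj c d)
  (hQ : ¬ ∃ a b c d : Fin n, a < b ∧ b < c ∧ c < d ∧
    H.Adj a d ∧ H.Adj b c ∧ ¬ H.Adj a b ∧ ¬ H.Adj a c ∧ ¬ H.Adj b d ∧ ¬ H.Adj c d)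

include h3 h4 hQ

lemma zLR (v : Fin n) : zEF H (v, false) < zEF H (v, true) := by
  by_cases h : (SSF H v).Nonempty
  · obtain ⟨u, hu, hinf⟩ := Finset.exists_mem_eq_inf' h (psiF H)
    simp only [SSF, Finset.mem_filter] at hu
    have hlt : psiF H v < psiF H u :=
      core_psi h3 h4 hQ hu.2.1 (le_refl v) hu.2.2 (H.loopless.irrefl v)
    rw [zEF_false, zEF_true, dif_pos h, hinf]
    have : (psiF H v : ℤ) < (psiF H u : ℤ) := by exact_mod_cast hlt
    omega
  · have := zEF_big_bound (H := H) v
    rw [zEF_true, dif_neg h]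
    exact this

lemma zA {x y : Fin n} (hxy : x < y) (hadj : H.Adj x y) :
    zEF H (y, true) < zEF H (x, false) := by
  have hmem : x ∈ SSF H y := by
    simp only [SSF, Finset.mem_filter]
    exact ⟨Finset.mem_univ _, hxy, hadj⟩
  have hne : (SSF H y).Nonempty := ⟨x, hmem⟩
  have hle : (SSF H y).inf' hne (psiF H) ≤ psiF H x := Finset.inf'_le _ hmem
  rw [zEF_false, zEF_true, dif_pos hne]
  have : (((SSF H y).inf' hne (psiF H) : ℕ) : ℤ) ≤ (psiF H x : ℤ) := by exact_mod_cast hle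
  omega

lemma zB {x y : Fin n} (hxy : x < y) (hnadj : ¬ H.Adj x y) :
    zEF H (x, false) < zEF H (y, true) := by
  by_cases h : (SSF H y).Nonempty
  · obtain ⟨u, hu, hinf⟩ := Finset.exists_mem_eq_inf' h (psiF H)
    simp only [SSF, Finset.mem_filter] at hu
    have hlt : psiF H x < psiF H u :=
      core_psi h3 h4 hQ hu.2.1 (le_of_lt hxy) hu.2.2 hnadj
    rw [zEF_false, zEF_true, dif_pos h, hinf]
    have : (psiF H x : ℤ) < (psiF H u : ℤ) := by exact_mod_cast hlt
    omega
  · have := zEF_big_bound (H := H) x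
    rw [zEF_true, dif_neg h]
    exact this

end Free

lemma idx_nonneg (e : Fin n × Bool) :
    (0 : ℤ) ≤ 2 * ((e.1 : ℕ) : ℤ) + (if e.2 then 1 else 0) := by
  have : (0 : ℤ) ≤ ((e.1 : ℕ) : ℤ) := Int.ofNat_nonneg _
  split <;> omega

lemma idx_lt (e : Fin n × Bool) :
    2 * ((e.1 : ℕ) : ℤ) + (if e.2 then 1 else 0) < 2 * (n : ℤ) + 2 := by
  have : ((e.1 : ℕ) : ℤ) < (n : ℤ) := by exact_mod_cast e.1.is_lt
  split <;> omega

lemma pEF_lt_of_z {e f : Fin n × Bool} (h : zEF H e < zEF H f) : pEF H e < pEF H f := by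
  have hM : (0 : ℤ) ≤ 2 * (n : ℤ) + 2 := by positivity
  have h1 : zEF H e + 1 ≤ zEF H f := h
  have h2 : (zEF H e + 1) * (2 * (n : ℤ) + 2) ≤ zEF H f * (2 * (n : ℤ) + 2) :=
    mul_le_mul_of_nonneg_right h1 hM
  have h5 := idx_nonneg f
  have h6 := idx_lt e
  simp only [pEF]
  nlinarith [h2, h5, h6]

lemma pEF_inj {e f : Fin n × Bool} (h : pEF H e = pEF H f) : e = f := by
  rcases lt_trichotomy (zEF H e) (zEF H f) with hz | hz | hz
  · exact absurd h (ne_of_lt (pEF_lt_of_z hz))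
  · have hidx : 2 * ((e.1 : ℕ) : ℤ) + (if e.2 then 1 else 0)
        = 2 * ((f.1 : ℕ) : ℤ) + (if f.2 then 1 else 0) := by
      simp only [pEF, hz] at h
      omega
    have hval : (e.1 : ℕ) = (f.1 : ℕ) ∧ e.2 = f.2 := by
      rcases e with ⟨a, b⟩; rcases f with ⟨c, d⟩
      cases b <;> cases d <;> simp_all <;> omega
    exact Prod.ext (Fin.ext hval.1) hval.2
  · exact absurd h.symm (ne_of_lt (pEF_lt_of_z hz))

end Rep12Aux

namespace Rep12Aux

variable {n : ℕ}

theorem suff (H : SimpleGraph (Fin n)) (hfree : I3J4Q4Free H) :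
    ∃ w : List (Fin n), w.length = 2 * n ∧ Rep12 w H := by
  classical
  letI : DecidableRel H.Adj := Classical.decRel _
  obtain ⟨h3, h4, hQ⟩ := hfree
  let r : (Fin n × Bool) → (Fin n × Bool) → Prop := fun e f => pEF H e ≤ pEF H f
  haveI : DecidableRel r := fun a b => inferInstanceAs (Decidable (_ ≤ _))
  haveI : IsTrans (Fin n × Bool) r := ⟨fun a b c hab hbc => le_trans hab hbc⟩
  haveI : IsAntisymm (Fin n × Bool) r := ⟨fun a b h1 h2 => pEF_inj (le_antisymm h1 h2)⟩
  haveI : IsTotal (Fin n × Bool) r := ⟨fun a b => le_total _ _⟩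
  set t : List (Fin n × Bool) := Finset.sort Finset.univ r with ht
  set w : List (Fin n) := t.map Prod.fst with hw
  have hsorted : t.Pairwise (fun e f => pEF H e ≤ pEF H f) := Finset.pairwise_sort _ r
  have hlen : w.length = 2 * n := by
    rw [hw, List.length_map, ht, Finset.length_sort, Finset.card_univ]
    simp [Fintype.card_prod]
    omega
  have hmemall : ∀ i : Fin n, i ∈ w := by
    intro i
    have : (i, false) ∈ t := (Finset.mem_sort r).2 (Finset.mem_univ _)
    exact List.mem_map_of_mem (f := Prod.fst) this
  have main : ∀ x y : Fin n, x < y → (H.Adj x y ↔ ¬ Has12 (subw w x y)) := by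
    intro x y hxy
    have hsubw : subw w x y
        = (t.filter fun e => decide (e.1 = x ∨ e.1 = y)).map Prod.fst := by
      unfold subw
      rw [hw, List.filter_map]
      rfl
    have hpair' : (t.filter fun e => decide (e.1 = x ∨ e.1 = y)).Pairwise
        (fun e f => pEF H e ≤ pEF H f) := hsorted.filter _
    constructor
    · intro hadj h12
      have hinf2 : [x, y] <:+: subw w x y := infix_xy_of_has12 hxy h12
      rw [hsubw] at hinf2
      obtain ⟨e, f, hex, hfy, hef⟩ := exists_pair_of_infix_map _ hinf2
      have hle : pEF H e ≤ pEF H f :=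
        rel_of_infix_pair (r := fun e f => pEF H e ≤ pEF H f) hef hpair'
      have hfe : (y, f.2) = f := by rw [← hfy]
      have hee : (x, e.2) = e := by rw [← hex]
      have hzf : zEF H f ≤ zEF H (y, true) := by
        rw [← hfe]
        cases f.2
        · exact (zLR h3 h4 hQ y).le
        · exact le_rfl
      have hze : zEF H (x, false) ≤ zEF H e := by
        rw [← hee]
        cases e.2
        · exact le_rfl
        · exact (zLR h3 h4 hQ x).le
      have hzlt : zEF H f < zEF H e :=
        lt_of_le_of_lt hzf (lt_of_lt_of_le (zA h3 h4 hQ hxy hadj) hze)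
      exact absurd hle (not_le.2 (pEF_lt_of_z hzlt))
    · intro h12n
      by_contra hnadj
      apply h12n
      have hz := zB h3 h4 hQ hxy hnadj
      have hp := pEF_lt_of_z hz
      have hmx : (x, false) ∈ t.filter (fun e => decide (e.1 = x ∨ e.1 = y)) :=
        List.mem_filter.2 ⟨(Finset.mem_sort r).2 (Finset.mem_univ _), by simp⟩
      have hmy : (y, true) ∈ t.filter (fun e => decide (e.1 = x ∨ e.1 = y)) :=
        List.mem_filter.2 ⟨(Finset.mem_sort r).2 (Finset.mem_univ _), by simp⟩
      obtain ⟨u, v, huv, hfv⟩ := before_of_sorted hpair' hmx hmy hp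
      refine ⟨x, y, hxy, ?_⟩
      rw [hsubw, huv, List.map_append, List.map_cons]
      have hally : ∀ a ∈ (List.map Prod.fst v), a = x ∨ a = y := by
        intro a ha
        obtain ⟨e, hev, rfl⟩ := List.mem_map.1 ha
        have hmem : e ∈ t.filter (fun e => decide (e.1 = x ∨ e.1 = y)) := by
          rw [huv]
          exact List.mem_append_right _ (List.mem_cons_of_mem _ hev)
        have := (List.mem_filter.1 hmem).2
        simpa using this
      have hy' : y ∈ List.map Prod.fst v := List.mem_map_of_mem (f := Prod.fst) hfv
      have hpre := infix_pair_of_mem_two (List.map Prod.fst v) hally hy'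
      obtain ⟨s1, s2, hs⟩ := hpre
      refine ⟨List.map Prod.fst u ++ s1, s2, ?_⟩
      simp only [List.append_assoc] at hs ⊢
      rw [hs]
  refine ⟨w, hlen, hmemall, ?_⟩
  intro x y hne
  rcases lt_or_gt_of_ne hne with h | h
  · exact main x y h
  · have hcomm : subw w x y = subw w y x :=
      List.filter_congr (fun a _ => decide_eq_decide.2 or_comm)
    rw [SimpleGraph.adj_comm, hcomm]
    exact main y x h

end Rep12Aux

/-- A graph admitting an $\{I_3,J_4,Q_4\}$-free labeling is 12-representable, with a
12-representant of length $2n$; combined with the necessary condition, a graph is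
12-representable iff it admits an $\{I_3,J_4,Q_4\}$-free labeling. -/
theorem rep12able_iff_I3J4Q4Free_labeling {V : Type} [Fintype V] (G : SimpleGraph V) :
    ((∃ f : V ≃ Fin (Fintype.card V), I3J4Q4Free (G.map f.toEmbedding)) →
      ∃ (f : V ≃ Fin (Fintype.card V)) (w : List (Fin (Fintype.card V))),
        w.length = 2 * Fintype.card V ∧ Rep12 w (G.map f.toEmbedding)) ∧
    (Rep12able G ↔ ∃ f : V ≃ Fin (Fintype.card V), I3J4Q4Free (G.map f.toEmbedding)) := by
  constructor
  · rintro ⟨f, hf⟩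
    obtain ⟨w, hlen, hrep⟩ := Rep12Aux.suff _ hf
    exact ⟨f, w, hlen, hrep⟩
  · constructor
    · rintro ⟨f, w, hrep⟩
      exact ⟨f, Rep12Aux.nec hrep⟩
    · rintro ⟨f, hf⟩
      obtain ⟨w, hlen, hrep⟩ := Rep12Aux.suff _ hf
      exact ⟨f, w, hrep⟩
end

section
/- A tree contains no subdivision of the claw with each edge subdivided twice (the spider T_3 with three legs of length 3) as a subtree if and only if it is a double caterpillar, i.e., there is a path P in the tree such that every vertex is within distance 2 of P. -/
/-- The spider `T₃`: a center vertex `0` with three legs of length 3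
(`0-1-2-3`, `0-4-5-6`, `0-7-8-9`). -/
def spiderT3 : SimpleGraph (Fin 10) :=
  SimpleGraph.fromEdgeSet
    {s(0, 1), s(1, 2), s(2, 3), s(0, 4), s(4, 5), s(5, 6), s(0, 7), s(7, 8), s(8, 9)}


open SimpleGraph Walk

variable {V : Type} {G : SimpleGraph V}

lemma tree_path_length (hG : G.IsTree) {u v : V} {p : G.Walk u v} (hp : p.IsPath) :
    p.length = G.dist u v := by
  obtain ⟨q, hq, hlen⟩ := hG.isConnected.exists_path_of_dist u v
  obtain ⟨r, -, hr⟩ := hG.existsUnique_path u v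
  rw [hr p hp, ← hr q hq, hlen]

lemma tree_dist_add (hG : G.IsTree) {u v z : V} {p : G.Walk u v} (hp : p.IsPath)
    (hz : z ∈ p.support) : G.dist u z + G.dist z v = G.dist u v := by
  classical
  rw [← tree_path_length hG hp, ← tree_path_length hG (hp.takeUntil hz),
    ← tree_path_length hG (hp.dropUntil hz), ← Walk.length_append,
    Walk.take_spec p hz]

lemma isPath_append' {u v w : V} {p : G.Walk u v} {q : G.Walk v w} (hp : p.IsPath)
    (hq : q.IsPath) (h : ∀ z ∈ p.support, z ∈ q.support → z = v) :
    (p.append q).IsPath := by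
  rw [Walk.isPath_def, Walk.support_append, List.nodup_append]
  refine ⟨hp.support_nodup, ?_, ?_⟩
  · have := hq.support_nodup
    rw [q.support_eq_cons] at this
    exact this.of_cons
  · intro z hz y hz' hzy
    subst hzy
    have hzq : z ∈ q.support := List.mem_of_mem_tail hz'
    have hzv : z = v := h z hz hzq
    subst hzv
    have := hq.support_nodup
    rw [q.support_eq_cons] at this
    exact (List.nodup_cons.mp this).1 hz'

lemma my_length_drop : ∀ {u v : V} (p : G.Walk u v) (n : ℕ), (p.drop n).length = p.length - n := by
  intro u v p
  induction p with
  | nil => intro n; cases n <;> simp [Walk.drop]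
  | cons h q ih =>
    intro n
    cases n with
    | zero => simp [Walk.drop]
    | succ n => simp [Walk.drop, ih]

lemma getVert_mem_support' {u v : V} (p : G.Walk u v) {i : ℕ} (hi : i ≤ p.length) :
    p.getVert i ∈ p.support :=
  Walk.mem_support_iff_exists_getVert.mpr ⟨i, rfl, hi⟩

lemma tree_dist_getVert (hG : G.IsTree) {u v : V} {p : G.Walk u v} (hp : p.IsPath)
    {i : ℕ} (hi : i ≤ p.length) : G.dist u (p.getVert i) = i := by
  have hmem := getVert_mem_support' p hi
  have hadd := tree_dist_add hG hp hmem
  have h1 : G.dist (p.getVert i) v ≤ p.length - i := by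
    have := SimpleGraph.dist_le (p.drop i)
    rwa [my_length_drop] at this
  have h2 : G.dist u (p.getVert i) ≤ i := by
    have hrev : p.reverse.getVert (p.length - i) = p.getVert i := by
      rw [Walk.getVert_reverse]
      congr 1
      omega
    have := SimpleGraph.dist_le ((p.reverse.drop (p.length - i)).copy hrev rfl)
    rw [Walk.length_copy, my_length_drop, Walk.length_reverse] at this
    have h3 : p.length - (p.length - i) = i := by omega
    rw [h3] at this
    rw [SimpleGraph.dist_comm]
    exact this
  have hL : G.dist u v = p.length := (tree_path_length hG hp).symm
  omega

lemma tree_dist_ne_of_adj (hG : G.IsTree) {a b y : V} (hab : G.Adj a b) :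
    G.dist a y ≠ G.dist b y := by
  intro heq
  obtain ⟨q, hq, hlen⟩ := hG.isConnected.exists_path_of_dist y b
  have hya : G.dist y a = G.dist a y := SimpleGraph.dist_comm
  have hyb : G.dist y b = G.dist b y := SimpleGraph.dist_comm
  have hane : a ∉ q.support := by
    intro ha
    have := tree_dist_add hG hq ha
    have h1 : G.dist a b = 1 := SimpleGraph.dist_eq_one_iff_adj.mpr hab
    omega
  have hpath : (q.append (Walk.cons hab.symm Walk.nil)).IsPath := by
    refine isPath_append' hq (by simp [hab.symm.ne]) ?_
    intro z hz hz'
    simp only [Walk.support_cons, Walk.support_nil, List.mem_cons,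
      List.mem_singleton, List.not_mem_nil, or_false] at hz'
    rcases hz' with rfl | rfl
    · rfl
    · exact absurd hz hane
  have hlen2 := tree_path_length hG hpath
  rw [Walk.length_append] at hlen2
  simp only [Walk.length_cons, Walk.length_nil] at hlen2
  rw [hlen] at hlen2
  omega

lemma tree_step_unique (hG : G.IsTree) {a y z1 z2 : V} (h1 : G.Adj a z1) (h2 : G.Adj a z2)
    (hd1 : G.dist z1 y + 1 = G.dist a y) (hd2 : G.dist z2 y + 1 = G.dist a y) :
    z1 = z2 := by
  obtain ⟨p1, hp1, hl1⟩ := hG.isConnected.exists_path_of_dist z1 y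
  obtain ⟨p2, hp2, hl2⟩ := hG.isConnected.exists_path_of_dist z2 y
  have key : ∀ (z : V) (h : G.Adj a z) (p : G.Walk z y), p.IsPath →
      p.length = G.dist z y → G.dist z y + 1 = G.dist a y → a ∉ p.support := by
    intro z h p hp hl hd ha
    have := tree_dist_add hG hp ha
    have h1 : G.dist z a = 1 := SimpleGraph.dist_eq_one_iff_adj.mpr h.symm
    omega
  have hq1 : (Walk.cons h1 p1).IsPath := hp1.cons (key z1 h1 p1 hp1 hl1 hd1)
  have hq2 : (Walk.cons h2 p2).IsPath := hp2.cons (key z2 h2 p2 hp2 hl2 hd2)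
  obtain ⟨r, -, hr⟩ := hG.existsUnique_path a y
  have heq : Walk.cons h1 p1 = Walk.cons h2 p2 := by rw [hr _ hq1, hr _ hq2]
  have := congrArg (fun w => Walk.getVert w 1) heq
  simpa [Walk.getVert_cons_succ] using this

lemma getVert_one_takeUntil [DecidableEq V] {c y z : V} (p : G.Walk c y) (hz : z ∈ p.support)
    (hzc : z ≠ c) : (p.takeUntil z hz).getVert 1 = p.getVert 1 := by
  have hlen : 0 < (p.takeUntil z hz).length := by
    rcases Nat.eq_zero_or_pos (p.takeUntil z hz).length with h0 | h
    · exfalso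
      apply hzc
      have hz0 : (p.takeUntil z hz).getVert (p.takeUntil z hz).length = z :=
        Walk.getVert_length _
      rw [h0, Walk.getVert_zero] at hz0
      exact hz0.symm
    · exact h
  have hspec := Walk.take_spec p hz
  have hg := congrArg (fun w => Walk.getVert w 1) hspec
  rw [Walk.getVert_append] at hg
  rcases Nat.lt_or_ge 1 (p.takeUntil z hz).length with hgt | hle
  · rw [if_pos hgt] at hg; exact hg
  · have h1 : (p.takeUntil z hz).length = 1 := by omega
    rw [if_neg (by omega), h1] at hg
    simp only [Nat.sub_self, Walk.getVert_zero] at hg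
    have hz1 : (p.takeUntil z hz).getVert (p.takeUntil z hz).length = z :=
      Walk.getVert_length _
    rw [h1] at hz1
    rw [hz1, ← hg]

lemma tree_dist_of_getVert_one_ne (hG : G.IsTree) {c y1 y2 : V} {p1 : G.Walk c y1}
    {p2 : G.Walk c y2} (hp1 : p1.IsPath) (hp2 : p2.IsPath) (h1 : 0 < p1.length)
    (h2 : 0 < p2.length) (hne : p1.getVert 1 ≠ p2.getVert 1) :
    G.dist y1 y2 = p1.length + p2.length := by
  classical
  have hint : ∀ z ∈ p1.support, z ∈ p2.support → z = c := by
    intro z hz1 hz2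
    by_contra hzc
    apply hne
    have ht1 : (p1.takeUntil z hz1).IsPath := hp1.takeUntil hz1
    have ht2 : (p2.takeUntil z hz2).IsPath := hp2.takeUntil hz2
    obtain ⟨r, -, hr⟩ := hG.existsUnique_path c z
    have heq : p1.takeUntil z hz1 = p2.takeUntil z hz2 := by rw [hr _ ht1, hr _ ht2]
    rw [← getVert_one_takeUntil p1 hz1 hzc, ← getVert_one_takeUntil p2 hz2 hzc, heq]
  have hpath : (p1.reverse.append p2).IsPath := by
    refine isPath_append' hp1.reverse hp2 ?_
    intro z hz hz'
    rw [Walk.support_reverse, List.mem_reverse] at hz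
    exact hint z hz hz'
  have := tree_path_length hG hpath
  rw [Walk.length_append, Walk.length_reverse] at this
  omega

lemma tree_support_dist_cases (hG : G.IsTree) {u v y1 y2 : V} {P : G.Walk u v}
    (hP : P.IsPath) (h1 : y1 ∈ P.support) (h2 : y2 ∈ P.support) :
    G.dist u y1 + G.dist y1 y2 = G.dist u y2 ∨ G.dist u y2 + G.dist y2 y1 = G.dist u y1 := by
  classical
  have h1' : y1 ∈ ((P.takeUntil y2 h2).append (P.dropUntil y2 h2)).support := by
    rw [Walk.take_spec]; exact h1
  rw [Walk.mem_support_append_iff] at h1'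
  rcases h1' with hcase | hcase
  · left
    exact tree_dist_add hG (hP.takeUntil h2) hcase
  · right
    have hdrop := tree_dist_add hG (hP.dropUntil h2) hcase
    have hP1 := tree_dist_add hG hP h1
    have hP2 := tree_dist_add hG hP h2
    have hc : G.dist u y2 + G.dist y2 v = G.dist u v := hP2
    omega


lemma spiderT3_adj_iff (a b : Fin 10) : spiderT3.Adj a b ↔
    (s(a, b) = s(0, 1) ∨ s(a, b) = s(1, 2) ∨ s(a, b) = s(2, 3) ∨ s(a, b) = s(0, 4) ∨
     s(a, b) = s(4, 5) ∨ s(a, b) = s(5, 6) ∨ s(a, b) = s(0, 7) ∨ s(a, b) = s(7, 8) ∨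
     s(a, b) = s(8, 9)) ∧ a ≠ b := by
  simp [spiderT3, SimpleGraph.fromEdgeSet_adj, Set.mem_insert_iff, Set.mem_singleton_iff]

instance : DecidableRel spiderT3.Adj := fun a b => decidable_of_iff' _ (spiderT3_adj_iff a b)

example : spiderT3.Adj 0 1 := by decide
example : ¬ spiderT3.Adj 0 2 := by decide

lemma spider_embedding (hG : G.IsTree) {c a b w : V} {A : G.Walk c a} {B : G.Walk c b}
    {C : G.Walk c w} (hA : A.IsPath) (hB : B.IsPath) (hC : C.IsPath)
    (lA : 3 ≤ A.length) (lB : 3 ≤ B.length) (lC : 3 ≤ C.length)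
    (hAB : ∀ z ∈ A.support, z ∈ B.support → z = c)
    (hAC : ∀ z ∈ A.support, z ∈ C.support → z = c)
    (hBC : ∀ z ∈ B.support, z ∈ C.support → z = c) :
    ∃ f : Fin 10 ↪ V, ∀ i j : Fin 10, spiderT3.Adj i j → G.Adj (f i) (f j) := by
  set W : ℕ → ℕ → V := fun l => if l = 0 then A.getVert else if l = 1 then B.getVert
    else C.getVert with hWdef
  set g : Fin 10 → V := fun i => if i.val = 0 then c else W ((i.val - 1) / 3) ((i.val - 1) % 3 + 1)
    with hgdef
  have hdW : ∀ l t, t ≤ 3 → G.dist c (W l t) = t := by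
    intro l t ht
    rcases Nat.eq_zero_or_pos l with rfl | hl
    · simpa [hWdef] using tree_dist_getVert hG hA (le_trans ht lA)
    rcases eq_or_ne l 1 with rfl | hl1
    · simpa [hWdef] using tree_dist_getVert hG hB (le_trans ht lB)
    · have : W l = C.getVert := by simp [hWdef, Nat.pos_iff_ne_zero.mp hl, hl1]
      rw [this]
      exact tree_dist_getVert hG hC (le_trans ht lC)
  have hcross : ∀ l l', l ≤ 2 → l' ≤ 2 → l ≠ l' → ∀ t t', 1 ≤ t → t ≤ 3 → 1 ≤ t' → t' ≤ 3 →
      W l t ≠ W l' t' := by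
    have key : ∀ (x y : V) (px : G.Walk c x) (py : G.Walk c y), px.IsPath →
        3 ≤ px.length → 3 ≤ py.length →
        (∀ z ∈ px.support, z ∈ py.support → z = c) → ∀ t t', 1 ≤ t → t ≤ 3 → t' ≤ 3 →
        px.getVert t ≠ py.getVert t' := by
      intro x y px py hpx hlx hly hxy t t' ht1 ht3 ht3' heq
      have hmem : px.getVert t ∈ px.support := getVert_mem_support' px (le_trans ht3 hlx)
      have hmem' : px.getVert t ∈ py.support := by
        rw [heq]; exact getVert_mem_support' py (le_trans ht3' hly)
      have hc := hxy _ hmem hmem'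
      have hd := tree_dist_getVert hG hpx (le_trans ht3 hlx)
      rw [hc, SimpleGraph.dist_self] at hd
      omega
    have hBA : ∀ z ∈ B.support, z ∈ A.support → z = c := fun z h1 h2 => hAB z h2 h1
    have hCA : ∀ z ∈ C.support, z ∈ A.support → z = c := fun z h1 h2 => hAC z h2 h1
    have hCB : ∀ z ∈ C.support, z ∈ B.support → z = c := fun z h1 h2 => hBC z h2 h1
    intro l l' hl hl' hne t t' ht1 ht3 ht1' ht3'
    interval_cases l <;> interval_cases l' <;> simp only [hWdef] <;> norm_num <;>
      first
        | exact absurd rfl hne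
        | exact key a b A B hA lA lB hAB t t' ht1 ht3 ht3'
        | exact key a w A C hA lA lC hAC t t' ht1 ht3 ht3'
        | exact key b a B A hB lB lA hBA t t' ht1 ht3 ht3'
        | exact key b w B C hB lB lC hBC t t' ht1 ht3 ht3'
        | exact key w a C A hC lC lA hCA t t' ht1 ht3 ht3'
        | exact key w b C B hC lC lB hCB t t' ht1 ht3 ht3'
  have hInj : Function.Injective g := by
    intro i j hij
    have hi9 : i.val ≤ 9 := by omega
    have hj9 : j.val ≤ 9 := by omega
    simp only [hgdef] at hij
    by_cases hi0 : i.val = 0 <;> by_cases hj0 : j.val = 0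
    · exact Fin.ext (by omega)
    · exfalso
      rw [if_pos hi0, if_neg hj0] at hij
      have := hdW ((j.val - 1) / 3) ((j.val - 1) % 3 + 1) (by omega)
      rw [← hij, SimpleGraph.dist_self] at this
      omega
    · exfalso
      rw [if_neg hi0, if_pos hj0] at hij
      have := hdW ((i.val - 1) / 3) ((i.val - 1) % 3 + 1) (by omega)
      rw [hij, SimpleGraph.dist_self] at this
      omega
    · rw [if_neg hi0, if_neg hj0] at hij
      have ht : (i.val - 1) % 3 + 1 = (j.val - 1) % 3 + 1 := by
        have d1 := hdW ((i.val - 1) / 3) ((i.val - 1) % 3 + 1) (by omega)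
        have d2 := hdW ((j.val - 1) / 3) ((j.val - 1) % 3 + 1) (by omega)
        rw [hij] at d1
        omega
      have hl : (i.val - 1) / 3 = (j.val - 1) / 3 := by
        by_contra hne
        exact hcross _ _ (by omega) (by omega) hne _ _ (by omega) (by omega) (by omega)
          (by omega) hij
      exact Fin.ext (by omega)
  have hadjW : ∀ l t, t < 3 → G.Adj (W l t) (W l (t + 1)) := by
    intro l t ht
    rcases Nat.eq_zero_or_pos l with rfl | hl
    · simpa [hWdef] using A.adj_getVert_succ (lt_of_lt_of_le ht lA)
    rcases eq_or_ne l 1 with rfl | hl1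
    · simpa [hWdef] using B.adj_getVert_succ (lt_of_lt_of_le ht lB)
    · have : W l = C.getVert := by simp [hWdef, Nat.pos_iff_ne_zero.mp hl, hl1]
      rw [this]
      exact C.adj_getVert_succ (lt_of_lt_of_le ht lC)
  have hadjc : ∀ l, G.Adj c (W l 1) := by
    intro l
    have := hadjW l 0 (by norm_num)
    have h0 : W l 0 = c := by
      rcases Nat.eq_zero_or_pos l with rfl | hl
      · simp [hWdef]
      rcases eq_or_ne l 1 with rfl | hl1
      · simp [hWdef]
      · simp [hWdef, Nat.pos_iff_ne_zero.mp hl, hl1]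
    rwa [h0] at this
  refine ⟨⟨g, hInj⟩, ?_⟩
  intro i j hab
  simp only [Function.Embedding.coeFn_mk]
  fin_cases i <;> fin_cases j <;>
    first
      | exact absurd hab (by decide)
      | exact hadjc 0 | exact hadjc 1 | exact hadjc 2
      | exact (hadjc 0).symm | exact (hadjc 1).symm | exact (hadjc 2).symm
      | exact hadjW 0 1 (by norm_num) | exact hadjW 0 2 (by norm_num)
      | exact hadjW 1 1 (by norm_num) | exact hadjW 1 2 (by norm_num)
      | exact hadjW 2 1 (by norm_num) | exact hadjW 2 2 (by norm_num)
      | exact (hadjW 0 1 (by norm_num)).symm | exact (hadjW 0 2 (by norm_num)).symm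
      | exact (hadjW 1 1 (by norm_num)).symm | exact (hadjW 1 2 (by norm_num)).symm
      | exact (hadjW 2 1 (by norm_num)).symm | exact (hadjW 2 2 (by norm_num)).symm


/-- A tree contains no copy of the spider `T₃` as a subtree iff it is a double
caterpillar: there is a path such that every vertex is within distance 2 of it. -/
theorem doubleCaterpillar_iff_no_T3 {V : Type} [Fintype V] [Nonempty V]
    (G : SimpleGraph V) (hG : G.IsTree) :
    (¬ ∃ f : Fin 10 ↪ V, ∀ a b : Fin 10, spiderT3.Adj a b → G.Adj (f a) (f b)) ↔
    ∃ (u v : V) (P : G.Walk u v), P.IsPath ∧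
      ∀ w : V, ∃ p ∈ P.support, G.dist w p ≤ 2 := by
  classical
  constructor
  · intro hno
    obtain ⟨uv, -, hmax⟩ := Finset.exists_max_image (Finset.univ : Finset (V × V))
      (fun p => G.dist p.1 p.2) ⟨(Classical.arbitrary V, Classical.arbitrary V),
        Finset.mem_univ _⟩
    obtain ⟨u, v⟩ := uv
    simp only [Finset.mem_univ, forall_const, forall_true_left] at hmax
    have hmax' : ∀ x y : V, G.dist x y ≤ G.dist u v := fun x y => hmax (x, y)
    obtain ⟨P, hP, hPlen⟩ := hG.isConnected.exists_path_of_dist u v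
    refine ⟨u, v, P, hP, ?_⟩
    intro w
    by_contra hw
    push_neg at hw
    obtain ⟨g, hgF, hgmin⟩ := Finset.exists_min_image P.support.toFinset
      (fun z => G.dist w z) ⟨u, List.mem_toFinset.mpr P.start_mem_support⟩
    have hgP : g ∈ P.support := List.mem_toFinset.mp hgF
    obtain ⟨R, hR, hRlen⟩ := hG.isConnected.exists_path_of_dist g w
    have h3 : 3 ≤ R.length := by
      have := hw g hgP
      rw [hRlen, SimpleGraph.dist_comm (u := g) (v := w)]
      omega
    have hRP : ∀ z ∈ R.support, z ∈ P.support → z = g := by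
      intro z hzR hzP
      have hadd := tree_dist_add hG hR hzR
      have hmin := hgmin z (List.mem_toFinset.mpr hzP)
      rw [(SimpleGraph.dist_comm (u := w) (v := z))] at hmin
      rw [(SimpleGraph.dist_comm (u := w) (v := g)), ← hRlen] at hmin
      have h0 : G.dist g z = 0 := by omega
      exact ((hG.isConnected.dist_eq_zero_iff).mp h0).symm
    have hP1 : (P.takeUntil g hgP).IsPath := hP.takeUntil hgP
    have hP2 : (P.dropUntil g hgP).IsPath := hP.dropUntil hgP
    have hqr : (P.takeUntil g hgP).length + (P.dropUntil g hgP).length = P.length := by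
      rw [← Walk.length_append, Walk.take_spec]
    have hq3 : 3 ≤ (P.takeUntil g hgP).length := by
      have hpath : (R.reverse.append (P.dropUntil g hgP)).IsPath := by
        refine isPath_append' hR.reverse hP2 ?_
        intro z hz hz'
        rw [Walk.support_reverse, List.mem_reverse] at hz
        exact hRP z hz (P.support_dropUntil_subset hgP hz')
      have hlen := tree_path_length hG hpath
      rw [Walk.length_append, Walk.length_reverse] at hlen
      have hle := hmax' w v
      rw [← hPlen] at hle
      omega
    have hr3 : 3 ≤ (P.dropUntil g hgP).length := by
      have hpath : (R.reverse.append (P.takeUntil g hgP).reverse).IsPath := by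
        refine isPath_append' hR.reverse hP1.reverse ?_
        intro z hz hz'
        rw [Walk.support_reverse, List.mem_reverse] at hz
        rw [Walk.support_reverse, List.mem_reverse] at hz'
        exact hRP z hz (P.support_takeUntil_subset hgP hz')
      have hlen := tree_path_length hG hpath
      rw [Walk.length_append, Walk.length_reverse, Walk.length_reverse] at hlen
      have hle := hmax' w u
      rw [← hPlen] at hle
      omega
    apply hno
    refine spider_embedding hG hP1.reverse hP2 hR
      (by rwa [Walk.length_reverse]) hr3 (by omega) ?_ ?_ ?_
    · intro z hz hz'
      rw [Walk.support_reverse, List.mem_reverse] at hz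
      have h1 := tree_dist_add hG hP1 hz
      have h2 := tree_dist_add hG hP2 hz'
      have h0 := tree_dist_add hG hP
        (P.support_takeUntil_subset hgP hz)
      have hl1 := tree_path_length hG hP1
      have hl2 := tree_path_length hG hP2
      have hl0 := tree_path_length hG hP
      rw [(SimpleGraph.dist_comm (u := z) (v := g))] at h1
      have hgz : G.dist g z = 0 := by omega
      exact ((hG.isConnected.dist_eq_zero_iff).mp hgz).symm
    · intro z hz hz'
      rw [Walk.support_reverse, List.mem_reverse] at hz
      exact (hRP z hz' (P.support_takeUntil_subset hgP hz))
    · intro z hz hz'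
      exact (hRP z hz' (P.support_dropUntil_subset hgP hz))
  · rintro ⟨u, v, P, hP, hcov⟩ ⟨f, hf⟩
    set c := f 0 with hc
    have hinj := f.injective
    have key : ∀ (x1 x2 x3 : V), G.Adj c x1 → G.Adj x1 x2 → G.Adj x2 x3 →
        x2 ≠ c → x3 ≠ x1 → x3 ≠ c →
        ∃ (p : V) (q : G.Walk c p), p ∈ P.support ∧ q.IsPath ∧
          1 ≤ q.length ∧ x1 = q.getVert 1 := by
      intro x1 x2 x3 h1 h2 h3 hx2c hx31 hx3c
      have w1 : (Walk.cons h3 Walk.nil).IsPath := by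
        refine Walk.IsPath.nil.cons ?_
        simp only [Walk.support_nil, List.mem_singleton]
        exact h3.ne
      have w2 : (Walk.cons h2 (Walk.cons h3 Walk.nil)).IsPath := by
        refine w1.cons ?_
        simp only [Walk.support_cons, Walk.support_nil, List.mem_cons, List.mem_singleton,
          List.not_mem_nil, or_false]
        push_neg
        exact ⟨h2.ne, fun hh => hx31 hh.symm⟩
      have hW : (Walk.cons h1 (Walk.cons h2 (Walk.cons h3 Walk.nil))).IsPath := by
        refine w2.cons ?_
        simp only [Walk.support_cons, Walk.support_nil, List.mem_cons, List.mem_singleton,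
          List.not_mem_nil, or_false]
        push_neg
        exact ⟨h1.ne, fun hh => hx2c hh.symm, fun hh => hx3c hh.symm⟩
      have hd3 : G.dist c x3 = 3 := by
        have := tree_path_length hG hW
        simpa using this.symm
      obtain ⟨p, hpP, hp2⟩ := hcov x3
      have htr : G.dist c x3 ≤ G.dist c p + G.dist p x3 := hG.isConnected.dist_triangle
      rw [(SimpleGraph.dist_comm (u := p) (v := x3))] at htr
      have hd1 : 1 ≤ G.dist c p := by omega
      obtain ⟨q, hq, hql⟩ := hG.isConnected.exists_path_of_dist c p
      have hqpos : 1 ≤ q.length := by omega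
      refine ⟨p, q, hpP, hq, hqpos, ?_⟩
      by_contra hx1q
      have hstep : G.Adj c (q.getVert 1) := by
        have := q.adj_getVert_succ (i := 0) (by omega)
        rwa [Walk.getVert_zero] at this
      have hg1d : G.dist (q.getVert 1) p + 1 = G.dist c p := by
        have hmem : q.getVert 1 ∈ q.support := getVert_mem_support' q (by omega)
        have hadd := tree_dist_add hG hq hmem
        have := tree_dist_getVert hG hq (i := 1) (by omega)
        omega
      -- dist x1 p = d + 1
      have htx1 : G.dist x1 p ≤ G.dist x1 c + G.dist c p := hG.isConnected.dist_triangle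
      have htx1' : G.dist c p ≤ G.dist c x1 + G.dist x1 p := hG.isConnected.dist_triangle
      have hcx1 : G.dist c x1 = 1 := SimpleGraph.dist_eq_one_iff_adj.mpr h1
      have hx1c : G.dist x1 c = 1 := SimpleGraph.dist_eq_one_iff_adj.mpr h1.symm
      have hne1 : G.dist c p ≠ G.dist x1 p := tree_dist_ne_of_adj hG h1
      have hnotminus : ¬ (G.dist x1 p + 1 = G.dist c p) := by
        intro hmin
        exact hx1q (tree_step_unique hG h1 hstep hmin hg1d)
      have hdx1 : G.dist x1 p = G.dist c p + 1 := by omega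
      -- dist x2 p = d + 2
      have htx2 : G.dist x2 p ≤ G.dist x2 x1 + G.dist x1 p := hG.isConnected.dist_triangle
      have htx2' : G.dist x1 p ≤ G.dist x1 x2 + G.dist x2 p := hG.isConnected.dist_triangle
      have h12d : G.dist x1 x2 = 1 := SimpleGraph.dist_eq_one_iff_adj.mpr h2
      have h21d : G.dist x2 x1 = 1 := SimpleGraph.dist_eq_one_iff_adj.mpr h2.symm
      have hne2 : G.dist x1 p ≠ G.dist x2 p := tree_dist_ne_of_adj hG h2
      have hcadj : G.Adj x1 c := h1.symm
      have hcd : G.dist c p + 1 = G.dist x1 p := by omega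
      have hnotminus2 : ¬ (G.dist x2 p + 1 = G.dist x1 p) := by
        intro hmin
        exact hx2c (tree_step_unique hG h2 hcadj hmin hcd)
      have hdx2 : G.dist x2 p = G.dist c p + 2 := by omega
      -- dist x3 p = d + 3
      have htx3 : G.dist x3 p ≤ G.dist x3 x2 + G.dist x2 p := hG.isConnected.dist_triangle
      have htx3' : G.dist x2 p ≤ G.dist x2 x3 + G.dist x3 p := hG.isConnected.dist_triangle
      have h23d : G.dist x2 x3 = 1 := SimpleGraph.dist_eq_one_iff_adj.mpr h3
      have h32d : G.dist x3 x2 = 1 := SimpleGraph.dist_eq_one_iff_adj.mpr h3.symm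
      have hne3 : G.dist x2 p ≠ G.dist x3 p := tree_dist_ne_of_adj hG h3
      have hx1adj : G.Adj x2 x1 := h2.symm
      have hx1d : G.dist x1 p + 1 = G.dist x2 p := by omega
      have hnotminus3 : ¬ (G.dist x3 p + 1 = G.dist x2 p) := by
        intro hmin
        exact hx31 (tree_step_unique hG h3 hx1adj hmin hx1d)
      have hdx3 : G.dist x3 p = G.dist c p + 3 := by omega
      omega
    have hne : ∀ (i j : Fin 10), i ≠ j → f i ≠ f j := fun i j hij h => hij (hinj h)
    obtain ⟨p1, q1, hp1P, hq1, hq1pos, hx1⟩ := key (f 1) (f 2) (f 3)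
      (hf 0 1 (by decide)) (hf 1 2 (by decide)) (hf 2 3 (by decide))
      (hne 2 0 (by decide)) (hne 3 1 (by decide)) (hne 3 0 (by decide))
    obtain ⟨p2, q2, hp2P, hq2, hq2pos, hx2⟩ := key (f 4) (f 5) (f 6)
      (hf 0 4 (by decide)) (hf 4 5 (by decide)) (hf 5 6 (by decide))
      (hne 5 0 (by decide)) (hne 6 4 (by decide)) (hne 6 0 (by decide))
    obtain ⟨p3, q3, hp3P, hq3, hq3pos, hx3⟩ := key (f 7) (f 8) (f 9)
      (hf 0 7 (by decide)) (hf 7 8 (by decide)) (hf 8 9 (by decide))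
      (hne 8 0 (by decide)) (hne 9 7 (by decide)) (hne 9 0 (by decide))
    have hd12 : G.dist p1 p2 = q1.length + q2.length :=
      tree_dist_of_getVert_one_ne hG hq1 hq2 hq1pos hq2pos
        (by rw [← hx1, ← hx2]; exact hne 1 4 (by decide))
    have hd13 : G.dist p1 p3 = q1.length + q3.length :=
      tree_dist_of_getVert_one_ne hG hq1 hq3 hq1pos hq3pos
        (by rw [← hx1, ← hx3]; exact hne 1 7 (by decide))
    have hd23 : G.dist p2 p3 = q2.length + q3.length :=
      tree_dist_of_getVert_one_ne hG hq2 hq3 hq2pos hq3pos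
        (by rw [← hx2, ← hx3]; exact hne 4 7 (by decide))
    have hO12 := tree_support_dist_cases hG hP hp1P hp2P
    have hO13 := tree_support_dist_cases hG hP hp1P hp3P
    have hO23 := tree_support_dist_cases hG hP hp2P hp3P
    rw [(SimpleGraph.dist_comm (u := p2) (v := p1))] at hO12
    rw [(SimpleGraph.dist_comm (u := p3) (v := p1))] at hO13
    rw [(SimpleGraph.dist_comm (u := p3) (v := p2))] at hO23
    rw [hd12] at hO12
    rw [hd13] at hO13
    rw [hd23] at hO23
    omega
end

section
/- Every co-interval graph is 12-representable: let G be a graph on [n] with intervals I_v = [ℓ_v, r_v] (all endpoints distinct) such that xy ∈ E(G) iff I_x ∩ I_y = ∅, with vertices labeled by increasing left endpoint. Then the word w listing, for all 2n endpoints from right to left, the label of the interval owning that endpoint, is a 12-representant of G. -/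
section Aux

/-- A list strictly sorted (descending) through an ℝ-valued map is determined by its
multiset of elements. -/
lemma sorted_perm_eq {α : Type*} {f : α → ℝ} :
    ∀ {l₁ l₂ : List α}, l₁.Perm l₂ →
      (l₁.map f).Pairwise (fun a b => b < a) →
      (l₂.map f).Pairwise (fun a b => b < a) → l₁ = l₂ := by
  intro l₁
  induction l₁ with
  | nil =>
    intro l₂ h _ _
    exact h.nil_eq
  | cons a t ih =>
    intro l₂ h h₁ h₂
    cases l₂ with
    | nil => exact absurd h.symm.nil_eq (by simp)
    | cons b t₂ =>
      have hab : a = b := by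
        have ha2 : a ∈ b :: t₂ := h.mem_iff.mp (List.mem_cons_self)
        rcases List.mem_cons.mp ha2 with h' | h'
        · exact h'
        · have hfa : f a < f b :=
            (List.pairwise_cons.mp h₂).1 _ (List.mem_map_of_mem (f := f) h')
          have hb1 : b ∈ a :: t := h.symm.mem_iff.mp (List.mem_cons_self)
          rcases List.mem_cons.mp hb1 with h'' | h''
          · exact h''.symm
          · have : f b < f a :=
              (List.pairwise_cons.mp h₁).1 _ (List.mem_map_of_mem (f := f) h'')
            linarith
      subst hab
      have ht := h.cons_inv
      rw [ih ht (List.pairwise_cons.mp h₁).2 (List.pairwise_cons.mp h₂).2]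

lemma flatMap_single {α β : Type*} (g : α → List β) (x : α) :
    ∀ l : List α, l.Nodup → x ∈ l → (∀ v ∈ l, v ≠ x → g v = []) → l.flatMap g = g x := by
  intro l
  induction l with
  | nil => intro _ hx; simp at hx
  | cons a t ih =>
    intro hnd hx h0
    rw [List.flatMap_cons]
    by_cases ha : a = x
    · subst ha
      have : t.flatMap g = [] := by
        apply List.flatMap_eq_nil_iff.mpr
        intro v hv
        exact h0 v (List.mem_cons_of_mem _ hv)
          (fun hvx => (List.nodup_cons.mp hnd).1 (hvx ▸ hv))
      rw [this, List.append_nil]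
    · have hx' : x ∈ t := by
        rcases List.mem_cons.mp hx with h' | h'
        · exact absurd h'.symm ha
        · exact h'
      rw [h0 a (List.mem_cons_self) ha, List.nil_append]
      exact ih (List.nodup_cons.mp hnd).2 hx' fun v hv => h0 v (List.mem_cons_of_mem _ hv)

lemma flatMap_pair {α β : Type*} (g : α → List β) (x y : α) (hxy : x ≠ y) :
    ∀ l : List α, l.Nodup → x ∈ l → y ∈ l →
      (∀ v ∈ l, v ≠ x → v ≠ y → g v = []) → (l.flatMap g).Perm (g x ++ g y) := by
  intro l
  induction l with
  | nil => intro _ hx; simp at hx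
  | cons a t ih =>
    intro hnd hx hy h0
    rw [List.flatMap_cons]
    by_cases ha : a = x
    · subst ha
      have hy' : y ∈ t := by
        rcases List.mem_cons.mp hy with h' | h'
        · exact absurd h'.symm hxy
        · exact h'
      have : t.flatMap g = g y :=
        flatMap_single g y t (List.nodup_cons.mp hnd).2 hy'
          (fun v hv hvy => h0 v (List.mem_cons_of_mem _ hv)
            (fun hvx => (List.nodup_cons.mp hnd).1 (hvx ▸ hv)) hvy)
      rw [this]
    · by_cases hb : a = y
      · subst hb
        have hx' : x ∈ t := by
          rcases List.mem_cons.mp hx with h' | h'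
          · exact absurd h'.symm ha
          · exact h'
        have : t.flatMap g = g x :=
          flatMap_single g x t (List.nodup_cons.mp hnd).2 hx'
            (fun v hv hvx => h0 v (List.mem_cons_of_mem _ hv) hvx
              (fun hvy => (List.nodup_cons.mp hnd).1 (hvy ▸ hv)))
        rw [this]
        exact List.perm_append_comm
      · have hx' : x ∈ t := by
          rcases List.mem_cons.mp hx with h' | h'
          · exact absurd h'.symm ha
          · exact h'
        have hy' : y ∈ t := by
          rcases List.mem_cons.mp hy with h' | h'
          · exact absurd h'.symm hb
          · exact h'
        rw [h0 a (List.mem_cons_self) ha hb, List.nil_append]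
        exact ih (List.nodup_cons.mp hnd).2 hx' hy'
          fun v hv => h0 v (List.mem_cons_of_mem _ hv)

lemma perm4_rev {α : Type*} (a b c d : α) : [a,b,c,d].Perm [d,c,b,a] := by
  simpa using ([a,b,c,d].reverse_perm).symm

lemma perm4_2 {α : Type*} (a b c d : α) : [a,b,c,d].Perm [d,b,c,a] :=
  (perm4_rev a b c d).trans (List.Perm.cons d (List.Perm.swap b c [a]))

lemma perm4_3 {α : Type*} (a b c d : α) : [a,b,c,d].Perm [b,d,c,a] :=
  (perm4_2 a b c d).trans (List.Perm.swap b d [c,a])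

lemma infix2 {α : Type*} {a b c d e f : α} (h : [a, b] <:+: [c, d, e, f]) :
    (a = c ∧ b = d) ∨ (a = d ∧ b = e) ∨ (a = e ∧ b = f) := by
  obtain ⟨s, t, hst⟩ := h
  rcases s with _ | ⟨s1, _ | ⟨s2, _ | ⟨s3, s'⟩⟩⟩
  · simp at hst; tauto
  · simp at hst; tauto
  · simp at hst; tauto
  · exfalso
    have := congrArg List.length hst
    simp [List.length_append] at this
    omega

lemma not_has12_yyxx {n : ℕ} {x y : Fin n} (hxy : x < y) : ¬ Has12 [y, y, x, x] := by
  rintro ⟨a, b, hab, hinf⟩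
  rcases infix2 hinf with ⟨h1, h2⟩ | ⟨h1, h2⟩ | ⟨h1, h2⟩
  · subst h1; subst h2; exact lt_irrefl _ hab
  · subst h1; subst h2; exact absurd hab (lt_asymm hxy)
  · subst h1; subst h2; exact lt_irrefl _ hab

lemma has12_yxyx {n : ℕ} {x y : Fin n} (hxy : x < y) : Has12 [y, x, y, x] :=
  ⟨x, y, hxy, ⟨[y], [x], rfl⟩⟩

lemma has12_xyyx {n : ℕ} {x y : Fin n} (hxy : x < y) : Has12 [x, y, y, x] :=
  ⟨x, y, hxy, ⟨[], [y, x], rfl⟩⟩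

lemma pairwise4 {a b c d : ℝ} (h1 : b < a) (h2 : c < b) (h3 : d < c) :
    ([a, b, c, d] : List ℝ).Pairwise (fun u v : ℝ => v < u) := by
  refine List.Pairwise.cons ?_ (List.Pairwise.cons ?_ (List.Pairwise.cons ?_
    (List.pairwise_singleton _ _)))
  · intro z hz; simp at hz; rcases hz with rfl | rfl | rfl <;> linarith
  · intro z hz; simp at hz; rcases hz with rfl | rfl <;> linarith
  · intro z hz; simp at hz; subst hz; linarith

end Aux

/-- Every co-interval graph is 12-representable: with intervals `[ℓ v, r v]` (all
endpoints distinct), adjacency = disjointness, and vertices labeled by increasing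
left endpoint (`ℓ` strictly monotone), the word listing the owners of all `2n`
endpoints from right to left 12-represents `G`. -/
theorem rep12_of_coInterval {n : ℕ} (G : SimpleGraph (Fin n))
    (ℓ r : Fin n → ℝ)
    (hlr : ∀ v, ℓ v < r v)
    (hmono : StrictMono ℓ)
    (hrinj : Function.Injective r)
    (hlne : ∀ u v, ℓ u ≠ r v)
    (hadj : ∀ x y : Fin n, x ≠ y →
      (G.Adj x y ↔ Set.Icc (ℓ x) (r x) ∩ Set.Icc (ℓ y) (r y) = ∅))
    (ps : List (ℝ × Fin n))
    (hsort : (ps.map Prod.fst).Pairwise (· > ·))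
    (hperm : ps.Perm ((List.finRange n).flatMap fun v => [(ℓ v, v), (r v, v)])) :
    Rep12 (ps.map Prod.snd) G := by
  classical
  constructor
  · intro i
    have hmem : (ℓ i, i) ∈ (List.finRange n).flatMap fun v => [(ℓ v, v), (r v, v)] := by
      refine List.mem_flatMap.mpr ⟨i, List.mem_finRange i, ?_⟩
      simp
    exact List.mem_map_of_mem (f := Prod.snd) (hperm.mem_iff.mpr hmem)
  · -- key claim for x < y
    have key : ∀ x y : Fin n, x < y → (G.Adj x y ↔ ¬ Has12 (subw (ps.map Prod.snd) x y)) := by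
      intro x y hxy
      have hxyne : x ≠ y := ne_of_lt hxy
      set P : ℝ × Fin n → Bool := fun p => decide (p.2 = x ∨ p.2 = y) with hP
      have hsub : subw (ps.map Prod.snd) x y = (ps.filter P).map Prod.snd := by
        unfold subw
        exact List.filter_map
      -- the filtered list is a permutation of the four endpoint pairs
      have hqE : (ps.filter P).Perm [(ℓ x, x), (r x, x), (ℓ y, y), (r y, y)] := by
        have h1 : (ps.filter P).Perm
            (((List.finRange n).flatMap fun v => [(ℓ v, v), (r v, v)]).filter P) :=
          hperm.filter P
        rw [List.filter_flatMap] at h1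
        have h2 : ((List.finRange n).flatMap
            fun v => ([(ℓ v, v), (r v, v)].filter P)).Perm
            (([(ℓ x, x), (r x, x)].filter P) ++ ([(ℓ y, y), (r y, y)].filter P)) := by
          apply flatMap_pair _ x y hxyne _ (List.nodup_finRange n)
            (List.mem_finRange x) (List.mem_finRange y)
          intro v _ hvx hvy
          simp [hP, hvx, hvy]
        have hfx : [(ℓ x, x), (r x, x)].filter P = [(ℓ x, x), (r x, x)] := by
          simp [hP]
        have hfy : [(ℓ y, y), (r y, y)].filter P = [(ℓ y, y), (r y, y)] := by
          simp [hP]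
        rw [hfx, hfy] at h2
        exact h1.trans h2
      -- sortedness of the filtered list
      have hps : ps.Pairwise (fun a b => b.1 < a.1) := by
        have := List.pairwise_map.mp hsort
        exact this.imp (fun h => h)
      have hqs : ((ps.filter P).map Prod.fst).Pairwise (fun a b : ℝ => b < a) :=
        List.pairwise_map.mpr (hps.sublist List.filter_sublist)
      -- basic inequalities
      have hlxy : ℓ x < ℓ y := hmono hxy
      have hlrx := hlr x
      have hlry := hlr y
      have hrne : r x ≠ r y := fun h => hxyne (hrinj h)
      have hAdj : G.Adj x y ↔ r x < ℓ y := by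
        rw [hadj x y hxyne, Set.Icc_inter_Icc]
        constructor
        · intro h
          by_contra hc
          push_neg at hc
          have hle : ℓ y ≤ r x := hc
          have : (ℓ y) ∈ Set.Icc (max (ℓ x) (ℓ y)) (min (r x) (r y)) := by
            simp [le_of_lt hlxy, hle, le_of_lt hlry]
          rw [h] at this
          exact this
        · intro h
          apply Set.Icc_eq_empty
          intro hle
          have h1 : max (ℓ x) (ℓ y) = ℓ y := max_eq_right (le_of_lt hlxy)
          rw [h1] at hle
          have := le_trans hle (min_le_left _ _)
          linarith
      rcases lt_or_gt_of_ne (hlne y x) with hc | hc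
      · -- intersecting: ℓ y < r x
        have hAdjF : ¬ G.Adj x y := by
          rw [hAdj]; intro h; linarith
        rcases lt_or_gt_of_ne hrne with hrr | hrr
        · -- r x < r y : sorted list is [(ry,y),(rx,x),(ℓy,y),(ℓx,x)]
          have hS : (ps.filter P) = [(r y, y), (r x, x), (ℓ y, y), (ℓ x, x)] := by
            apply sorted_perm_eq (f := Prod.fst)
              (hqE.trans (perm4_2 (ℓ x, x) (r x, x) (ℓ y, y) (r y, y))) hqs
            simp only [List.map_cons, List.map_nil]
            exact pairwise4 (by linarith) (by linarith) (by linarith)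
          rw [hsub, hS]
          simp only [List.map_cons, List.map_nil]
          exact iff_of_false hAdjF (not_not_intro (has12_yxyx hxy))
        · -- r y < r x : sorted list is [(rx,x),(ry,y),(ℓy,y),(ℓx,x)]
          have hS : (ps.filter P) = [(r x, x), (r y, y), (ℓ y, y), (ℓ x, x)] := by
            apply sorted_perm_eq (f := Prod.fst)
              (hqE.trans (perm4_3 (ℓ x, x) (r x, x) (ℓ y, y) (r y, y))) hqs
            simp only [List.map_cons, List.map_nil]
            exact pairwise4 (by linarith) (by linarith) (by linarith)
          rw [hsub, hS]
          simp only [List.map_cons, List.map_nil]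
          exact iff_of_false hAdjF (not_not_intro (has12_xyyx hxy))
      · -- disjoint: r x < ℓ y ; sorted list is [(ry,y),(ℓy,y),(rx,x),(ℓx,x)]
        have hS : (ps.filter P) = [(r y, y), (ℓ y, y), (r x, x), (ℓ x, x)] := by
          apply sorted_perm_eq (f := Prod.fst)
            (hqE.trans (perm4_rev (ℓ x, x) (r x, x) (ℓ y, y) (r y, y))) hqs
          simp only [List.map_cons, List.map_nil]
          exact pairwise4 (by linarith) (by linarith) (by linarith)
        rw [hsub, hS]
        simp only [List.map_cons, List.map_nil]
        exact iff_of_true (hAdj.mpr hc) (not_has12_yyxx hxy)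
    intro x y hxy
    rcases lt_or_gt_of_ne hxy with h | h
    · exact key x y h
    · have hsw : subw (ps.map Prod.snd) x y = subw (ps.map Prod.snd) y x := by
        unfold subw
        congr 1
        funext a
        exact decide_eq_decide.mpr or_comm
      rw [G.adj_comm, hsw]
      exact key y x h
end
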